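/- arXiv:1306.6367 — 2 statements merged into one kernel-verified Lean document; each statement's English description precedes it below -/
import Mathlib

section
/- Let n ≥ 2, let U ⊆ ℝ^{n+1} be open, and let y_1,…,y_{n−1}, z : U → ℝ be smooth functions satisfying equations (E1), (E2), (E3) at every point of U. Fix 1 ≤ k ≤ n−1 and let μ = F*α be the pull-back of the standard contact form under the graph map, i.e. μ_p = α_{F(p)} ∘ dF_p. If γ : I → U is an integral curve of Ṽ_k (γ′(t) = Ṽ_k(γ(t)) for all t in the interval I) and w : I → ℝ^{n+1} solves the linearized equation w′(t) = (DṼ_k)_{γ(t)}(w(t)), then the function t ↦ μ_{γ(t)}(w(t)) is constant on I. (Equivalently, the Lie derivative L_{Ṽ_k} μ vanishes, so the flow of Ṽ_k preserves μ.) -/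
open scoped BigOperators

/-- Partial derivative of `f` in the `i`-th coordinate direction. -/
noncomputable def pd {m : ℕ} (i : Fin m) (f : (Fin m → ℝ) → ℝ) (p : Fin m → ℝ) : ℝ :=
  fderiv ℝ f p (Pi.single i 1)

/-- Index of the coordinate `x_a` (for `1 ≤ a ≤ n-1`) in `ℝ^{n+1}` with
coordinates `(x_1, …, x_n, y_n)`. -/
def xIdx {n : ℕ} (a : Fin (n - 1)) : Fin (n + 1) := Fin.castLE (by omega) a

/-- Index of the coordinate `x_n`. -/
def xnIdx (n : ℕ) : Fin (n + 1) := ⟨n - 1, by omega⟩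

/-- Index of the coordinate `y_n`. -/
def ynIdx (n : ℕ) : Fin (n + 1) := ⟨n, by omega⟩

/-- Equation (E0). -/
noncomputable def E0 {n : ℕ} (y : Fin (n - 1) → (Fin (n + 1) → ℝ) → ℝ)
    (z : (Fin (n + 1) → ℝ) → ℝ) (a b c : Fin (n - 1)) (p : Fin (n + 1) → ℝ) : ℝ :=
  (pd (xIdx a) z p - y a p) * (pd (xIdx c) (y b) p - pd (xIdx b) (y c) p)
    - (pd (xIdx b) z p - y b p) * (pd (xIdx c) (y a) p - pd (xIdx a) (y c) p)
    + (pd (xIdx c) z p - y c p) * (pd (xIdx b) (y a) p - pd (xIdx a) (y b) p)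

/-- Equation (E1). -/
noncomputable def E1 {n : ℕ} (y : Fin (n - 1) → (Fin (n + 1) → ℝ) → ℝ)
    (z : (Fin (n + 1) → ℝ) → ℝ) (a b : Fin (n - 1)) (p : Fin (n + 1) → ℝ) : ℝ :=
  (pd (xIdx a) z p - y a p) * pd (xnIdx n) (y b) p
    - (pd (xIdx b) z p - y b p) * pd (xnIdx n) (y a) p
    + (pd (xnIdx n) z p - p (ynIdx n)) * (pd (xIdx b) (y a) p - pd (xIdx a) (y b) p)

/-- Equation (E2). -/
noncomputable def E2 {n : ℕ} (y : Fin (n - 1) → (Fin (n + 1) → ℝ) → ℝ)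
    (z : (Fin (n + 1) → ℝ) → ℝ) (a b : Fin (n - 1)) (p : Fin (n + 1) → ℝ) : ℝ :=
  (pd (xIdx a) z p - y a p) * pd (ynIdx n) (y b) p
    - (pd (xIdx b) z p - y b p) * pd (ynIdx n) (y a) p
    + pd (ynIdx n) z p * (pd (xIdx b) (y a) p - pd (xIdx a) (y b) p)

/-- Equation (E3). -/
noncomputable def E3 {n : ℕ} (y : Fin (n - 1) → (Fin (n + 1) → ℝ) → ℝ)
    (z : (Fin (n + 1) → ℝ) → ℝ) (a : Fin (n - 1)) (p : Fin (n + 1) → ℝ) : ℝ :=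
  pd (xIdx a) z p - (pd (xnIdx n) z p - p (ynIdx n)) * pd (ynIdx n) (y a) p
    + pd (ynIdx n) z p * pd (xnIdx n) (y a) p - y a p

/-- The function `Λ_{a,b}`. -/
noncomputable def Lam {n : ℕ} (y : Fin (n - 1) → (Fin (n + 1) → ℝ) → ℝ)
    (a b : Fin (n - 1)) (p : Fin (n + 1) → ℝ) : ℝ :=
  pd (ynIdx n) (y a) p * pd (xnIdx n) (y b) p - pd (ynIdx n) (y b) p * pd (xnIdx n) (y a) p
    + pd (xIdx b) (y a) p - pd (xIdx a) (y b) p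

/-- The graph map `F : ℝ^{n+1} → ℝ^{2n+1}`,
`F(x_1,…,x_n,y_n) = (x_1,…,x_n,y_1,…,y_{n-1},y_n,z)`. -/
noncomputable def graphMap (n : ℕ) (y : Fin (n - 1) → (Fin (n + 1) → ℝ) → ℝ)
    (z : (Fin (n + 1) → ℝ) → ℝ) (p : Fin (n + 1) → ℝ) : Fin (2 * n + 1) → ℝ := fun i =>
  if h1 : (i : ℕ) < n then p ⟨i, by omega⟩
  else if h2 : (i : ℕ) < 2 * n - 1 then y ⟨(i : ℕ) - n, by omega⟩ p
  else if h3 : (i : ℕ) = 2 * n - 1 then p (ynIdx n)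
  else z p

/-- The standard contact form `α = dz - Σ y_i dx_i` on `ℝ^{2n+1}` with coordinates
`(x_1,…,x_n,y_1,…,y_n,z)`, evaluated at the point `q` on the vector `v`. -/
noncomputable def contactForm (n : ℕ) (q v : Fin (2 * n + 1) → ℝ) : ℝ :=
  v ⟨2 * n, by omega⟩
    - ∑ i : Fin n, q ⟨n + i, by have := i.isLt; omega⟩ * v ⟨i, by have := i.isLt; omega⟩

/-- The standard symplectic form `ω₀ = Σ dx_i ∧ dy_i = dα` on `ℝ^{2n+1}`. -/
noncomputable def omega0 (n : ℕ) (u v : Fin (2 * n + 1) → ℝ) : ℝ :=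
  ∑ i : Fin n, (u ⟨i, by have := i.isLt; omega⟩ * v ⟨n + i, by have := i.isLt; omega⟩
    - u ⟨n + i, by have := i.isLt; omega⟩ * v ⟨i, by have := i.isLt; omega⟩)

/-- The 3-form `α ∧ ω₀` evaluated at the point `q` on the vectors `u, v, w`. -/
noncomputable def awedge (n : ℕ) (q u v w : Fin (2 * n + 1) → ℝ) : ℝ :=
  contactForm n q u * omega0 n v w - contactForm n q v * omega0 n u w
    + contactForm n q w * omega0 n u v

/-- The vector field `Ṽ_k = ∂_{x_k} - (∂y_k/∂y_n) ∂_{x_n} + (∂y_k/∂x_n) ∂_{y_n}` on `ℝ^{n+1}`. -/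
noncomputable def Vt (n : ℕ) (y : Fin (n - 1) → (Fin (n + 1) → ℝ) → ℝ) (k : Fin (n - 1))
    (p : Fin (n + 1) → ℝ) : Fin (n + 1) → ℝ :=
  (Pi.single (xIdx k) 1 : Fin (n + 1) → ℝ)
    - pd (ynIdx n) (y k) p • (Pi.single (xnIdx n) 1 : Fin (n + 1) → ℝ)
    + pd (xnIdx n) (y k) p • (Pi.single (ynIdx n) 1 : Fin (n + 1) → ℝ)

open Filter Topology

section toolbox
variable {m : ℕ} {f g : (Fin m → ℝ) → ℝ} {U : Set (Fin m → ℝ)} {p : Fin m → ℝ}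

lemma pd_congr (hU : IsOpen U) (h : ∀ q ∈ U, f q = g q) (hp : p ∈ U) (i : Fin m) :
    pd i f p = pd i g p := by
  unfold pd
  rw [Filter.EventuallyEq.fderiv_eq]
  filter_upwards [hU.mem_nhds hp] with q hq using h q hq

lemma pd_const (i : Fin m) (c : ℝ) (p : Fin m → ℝ) : pd i (fun _ => c) p = 0 := by
  simp [pd]

lemma pd_proj (i j : Fin m) (p : Fin m → ℝ) :
    pd i (fun q => q j) p = if j = i then 1 else 0 := by
  have : (fun q : Fin m → ℝ => q j) = (ContinuousLinearMap.proj j : (Fin m → ℝ) →L[ℝ] ℝ) := rfl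
  rw [pd, this, ContinuousLinearMap.fderiv]
  simp [Pi.single_apply]

lemma pd_sub (i : Fin m) (hf : DifferentiableAt ℝ f p) (hg : DifferentiableAt ℝ g p) :
    pd i (fun q => f q - g q) p = pd i f p - pd i g p := by
  simp [pd, fderiv_fun_sub hf hg]

lemma pd_add (i : Fin m) (hf : DifferentiableAt ℝ f p) (hg : DifferentiableAt ℝ g p) :
    pd i (fun q => f q + g q) p = pd i f p + pd i g p := by
  simp [pd, fderiv_fun_add hf hg]

lemma pd_mul (i : Fin m) (hf : DifferentiableAt ℝ f p) (hg : DifferentiableAt ℝ g p) :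
    pd i (fun q => f q * g q) p = f p * pd i g p + g p * pd i f p := by
  simp [pd, fderiv_fun_mul hf hg]

lemma contDiffOn_pd (hU : IsOpen U) (hf : ContDiffOn ℝ (⊤ : ℕ∞) f U) (i : Fin m) :
    ContDiffOn ℝ (⊤ : ℕ∞) (pd i f) U := by
  have h1 : ContDiffOn ℝ (⊤ : ℕ∞) (fderiv ℝ f) U := by
    have := (contDiffOn_infty_iff_fderiv_of_isOpen hU).1 hf
    exact this.2
  exact (ContinuousLinearMap.apply ℝ ℝ (Pi.single i 1 : Fin m → ℝ)).contDiff.comp_contDiffOn h1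

lemma diffAt_of_contDiffOn (hU : IsOpen U) (hf : ContDiffOn ℝ (⊤ : ℕ∞) f U) (hp : p ∈ U) :
    DifferentiableAt ℝ f p :=
  (hf.contDiffAt (hU.mem_nhds hp)).differentiableAt (by
    have : ((1:ℕ∞) : WithTop ℕ∞) ≤ ((⊤ : ℕ∞) : WithTop ℕ∞) := WithTop.coe_le_coe.2 le_top
    simpa using this)

lemma fderiv_eq_sum_pd (hf : DifferentiableAt ℝ f p) (v : Fin m → ℝ) :
    fderiv ℝ f p v = ∑ i, v i * pd i f p := by
  have hv : v = ∑ i, v i • (Pi.single i 1 : Fin m → ℝ) := by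
    funext j; simp [Pi.single_apply]
  calc fderiv ℝ f p v = fderiv ℝ f p (∑ i, v i • (Pi.single i 1 : Fin m → ℝ)) := by rw [← hv]
  _ = ∑ i, v i * pd i f p := by rw [map_sum]; simp [pd]

lemma pd_comm (hU : IsOpen U) (hf : ContDiffOn ℝ (⊤ : ℕ∞) f U) (hp : p ∈ U) (i j : Fin m) :
    pd i (pd j f) p = pd j (pd i f) p := by
  have hca : ContDiffAt ℝ (⊤ : ℕ∞) f p := hf.contDiffAt (hU.mem_nhds hp)
  have hsymm : ∀ v w, fderiv ℝ (fderiv ℝ f) p v w = fderiv ℝ (fderiv ℝ f) p w v := by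
    intro v w
    have h2 : (2 : WithTop ℕ∞) ≤ ((⊤ : ℕ∞) : WithTop ℕ∞) := by
      have : ((2:ℕ∞) : WithTop ℕ∞) ≤ ((⊤ : ℕ∞) : WithTop ℕ∞) := WithTop.coe_le_coe.2 le_top
      simpa using this
    exact (hca.isSymmSndFDerivAt (by rw [minSmoothness_of_isRCLikeNormedField]; exact h2)).eq v w
  have hdf : DifferentiableAt ℝ (fderiv ℝ f) p := by
    have h1 : ContDiffOn ℝ (⊤ : ℕ∞) (fderiv ℝ f) U :=
      ((contDiffOn_infty_iff_fderiv_of_isOpen hU).1 hf).2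
    exact (h1.contDiffAt (hU.mem_nhds hp)).differentiableAt (by
      have : ((1:ℕ∞) : WithTop ℕ∞) ≤ ((⊤ : ℕ∞) : WithTop ℕ∞) := WithTop.coe_le_coe.2 le_top
      simpa using this)
  have key : ∀ u v : Fin m → ℝ,
      fderiv ℝ (fun q => fderiv ℝ f q v) p u = fderiv ℝ (fderiv ℝ f) p u v := by
    intro u v
    have := fderiv_clm_apply hdf (differentiableAt_const v)
    rw [show (fun q => fderiv ℝ f q v) = (fun q => (fderiv ℝ f q) ((fun _ => v) q)) from rfl, this]
    simp
  show pd i (fun q => pd j f q) p = pd j (fun q => pd i f q) p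
  unfold pd
  rw [key, key, hsymm]

end toolbox


lemma sum_split_fin (n : ℕ) (hn : 1 ≤ n) (f : Fin n → ℝ) :
    ∑ i, f i = (∑ a : Fin (n-1), f (Fin.castLE (by omega) a)) + f ⟨n-1, by omega⟩ := by
  have h : n - 1 + 1 = n := by omega
  rw [← Fin.sum_congr' f h, Fin.sum_univ_castSucc]
  congr 1

lemma sum_split (n : ℕ) (hn : 2 ≤ n) (f : Fin (n+1) → ℝ) :
    ∑ i, f i = (∑ a : Fin (n-1), f (xIdx a)) + f (xnIdx n) + f (ynIdx n) := by
  rw [Fin.sum_univ_castSucc, sum_split_fin n (by omega) (fun i => f i.castSucc)]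
  rfl
section lamsec
variable {n : ℕ} {U : Set (Fin (n+1) → ℝ)}
  {y : Fin (n-1) → (Fin (n+1) → ℝ) → ℝ} {z : (Fin (n+1) → ℝ) → ℝ}

lemma lam_zero (hn : 2 ≤ n) (hU : IsOpen U)
    (hy : ∀ a, ContDiffOn ℝ (⊤:ℕ∞) (y a) U) (hz : ContDiffOn ℝ (⊤:ℕ∞) z U)
    (hE1 : ∀ a b, ∀ p ∈ U, E1 y z a b p = 0)
    (hE2 : ∀ a b, ∀ p ∈ U, E2 y z a b p = 0)
    (hE3 : ∀ a, ∀ p ∈ U, E3 y z a p = 0)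
    (a b : Fin (n-1)) : ∀ p ∈ U, Lam y a b p = 0 := by
  intro p hp
  by_contra hne
  have hBL : ∀ q ∈ U, (pd (xnIdx n) z q - q (ynIdx n)) * Lam y a b q = 0 := by
    intro q hq
    have h1 := hE1 a b q hq; have h3a := hE3 a q hq; have h3b := hE3 b q hq
    unfold E1 E3 at *
    unfold Lam
    linear_combination h1 - pd (xnIdx n) (y b) q * h3a + pd (xnIdx n) (y a) q * h3b
  have hCL : ∀ q ∈ U, pd (ynIdx n) z q * Lam y a b q = 0 := by
    intro q hq
    have h2 := hE2 a b q hq; have h3a := hE3 a q hq; have h3b := hE3 b q hq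
    unfold E2 E3 at *
    unfold Lam
    linear_combination h2 - pd (ynIdx n) (y b) q * h3a + pd (ynIdx n) (y a) q * h3b
  have hcont : ContinuousOn (Lam y a b) U := by
    have c1 := (contDiffOn_pd hU (hy a) (ynIdx n)).continuousOn
    have c2 := (contDiffOn_pd hU (hy b) (xnIdx n)).continuousOn
    have c3 := (contDiffOn_pd hU (hy b) (ynIdx n)).continuousOn
    have c4 := (contDiffOn_pd hU (hy a) (xnIdx n)).continuousOn
    have c5 := (contDiffOn_pd hU (hy a) (xIdx b)).continuousOn
    have c6 := (contDiffOn_pd hU (hy b) (xIdx a)).continuousOn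
    show ContinuousOn (fun p => _) U
    unfold Lam
    exact (((c1.mul c2).sub (c3.mul c4)).add c5).sub c6
  have hca : ContinuousAt (Lam y a b) p := hcont.continuousAt (hU.mem_nhds hp)
  have hmem : {q | q ∈ U ∧ Lam y a b q ≠ 0} ∈ nhds p := by
    have h1 : U ∈ nhds p := hU.mem_nhds hp
    have h2 : {q | Lam y a b q ≠ 0} ∈ nhds p := hca.eventually_ne hne
    exact Filter.inter_mem h1 h2
  obtain ⟨V, hVsub, hVopen, hpV⟩ := mem_nhds_iff.1 hmem
  have hBV : ∀ q ∈ V, pd (xnIdx n) z q = q (ynIdx n) := by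
    intro q hq
    have h0 := hBL q (hVsub hq).1
    rcases mul_eq_zero.1 h0 with h | h
    · linarith
    · exact absurd h (hVsub hq).2
  have hCV : ∀ q ∈ V, pd (ynIdx n) z q = (0:ℝ) := by
    intro q hq
    have h0 := hCL q (hVsub hq).1
    rcases mul_eq_zero.1 h0 with h | h
    · exact h
    · exact absurd h (hVsub hq).2
  have h1 : pd (ynIdx n) (pd (xnIdx n) z) p = 1 := by
    rw [pd_congr hVopen hBV hpV (ynIdx n), pd_proj]
    simp
  have h2 : pd (xnIdx n) (pd (ynIdx n) z) p = 0 := by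
    have := pd_congr hVopen hCV hpV (xnIdx n)
    rw [this, pd_const]
  have hcomm := pd_comm hU hz hp (ynIdx n) (xnIdx n)
  rw [h1, h2] at hcomm
  exact one_ne_zero hcomm
end lamsec
section graphsec
variable {n : ℕ} {U : Set (Fin (n+1) → ℝ)}
  {y : Fin (n-1) → (Fin (n+1) → ℝ) → ℝ} {z : (Fin (n+1) → ℝ) → ℝ}

lemma graph_components (hU : IsOpen U)
    (hy : ∀ a, ContDiffOn ℝ (⊤:ℕ∞) (y a) U) (hz : ContDiffOn ℝ (⊤:ℕ∞) z U)
    {p : Fin (n+1) → ℝ} (hp : p ∈ U) (hn : 2 ≤ n) :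
    ∀ i : Fin (2*n+1), DifferentiableAt ℝ (fun q => graphMap n y z q i) p := by
  intro i
  by_cases h1 : (i:ℕ) < n
  · have he : (fun q : Fin (n+1) → ℝ => graphMap n y z q i) = fun q => q ⟨i, by omega⟩ := by
      funext q; simp [graphMap, h1]
    rw [he]
    exact (ContinuousLinearMap.proj (R := ℝ) (φ := fun _ : Fin (n+1) => ℝ)
      (⟨i, by omega⟩ : Fin (n+1))).differentiableAt
  by_cases h2 : (i:ℕ) < 2*n-1
  · have he : (fun q : Fin (n+1) → ℝ => graphMap n y z q i) = y ⟨(i:ℕ) - n, by omega⟩ := by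
      funext q; simp [graphMap, h1, h2]
    rw [he]; exact diffAt_of_contDiffOn hU (hy _) hp
  by_cases h3 : (i:ℕ) = 2*n-1
  · have he : (fun q : Fin (n+1) → ℝ => graphMap n y z q i) = fun q => q (ynIdx n) := by
      funext q
      simp only [graphMap, h3]
      rw [dif_neg (show ¬(2*n-1 < n) by omega), dif_neg (show ¬(2*n-1 < 2*n-1) by omega),
        dif_pos trivial]
    rw [he]
    exact (ContinuousLinearMap.proj (R := ℝ) (φ := fun _ : Fin (n+1) => ℝ)
      (ynIdx n)).differentiableAt
  · have he : (fun q : Fin (n+1) → ℝ => graphMap n y z q i) = z := by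
      funext q; simp [graphMap, h1, h2, h3]
    rw [he]; exact diffAt_of_contDiffOn hU hz hp

lemma graph_contact (hn : 2 ≤ n) (hU : IsOpen U)
    (hy : ∀ a, ContDiffOn ℝ (⊤:ℕ∞) (y a) U) (hz : ContDiffOn ℝ (⊤:ℕ∞) z U)
    {p : Fin (n+1) → ℝ} (hp : p ∈ U) (v : Fin (n+1) → ℝ) :
    contactForm n (graphMap n y z p) (fderiv ℝ (graphMap n y z) p v) =
      (∑ a : Fin (n-1), (pd (xIdx a) z p - y a p) * v (xIdx a))
        + (pd (xnIdx n) z p - p (ynIdx n)) * v (xnIdx n)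
        + pd (ynIdx n) z p * v (ynIdx n) := by
  have hdc := graph_components hU hy hz hp hn
  have hfd : ∀ j : Fin (2*n+1),
      fderiv ℝ (graphMap n y z) p v j = fderiv ℝ (fun q => graphMap n y z q j) p v := by
    intro j
    have hpi := fderiv_pi (𝕜 := ℝ) (φ := fun j q => graphMap n y z q j) hdc
    rw [show (fun (x : Fin (n+1) → ℝ) (i : Fin (2*n+1)) => graphMap n y z x i)
        = graphMap n y z from rfl] at hpi
    rw [hpi]
    simp
  -- the z-component
  have hz2n : fderiv ℝ (graphMap n y z) p v ⟨2*n, by omega⟩ = fderiv ℝ z p v := by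
    rw [hfd]
    have he : (fun q : Fin (n+1) → ℝ => graphMap n y z q ⟨2*n, by omega⟩) = z := by
      funext q
      have h1 : ¬ ((2*n : ℕ) < n) := by omega
      have h2 : ¬ ((2*n : ℕ) < 2*n-1) := by omega
      have h3 : ¬ ((2*n : ℕ) = 2*n-1) := by omega
      simp [graphMap, h1, h2, h3]
    rw [he]
  -- coordinate components, i < n
  have hcoord : ∀ (i : ℕ) (hi : i < n),
      fderiv ℝ (graphMap n y z) p v ⟨i, by omega⟩ = v ⟨i, by omega⟩ := by
    intro i hi
    rw [hfd]
    have he : (fun q : Fin (n+1) → ℝ => graphMap n y z q ⟨i, by omega⟩)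
        = fun q => q ⟨i, by omega⟩ := by
      funext q; simp [graphMap, hi]
    rw [he]
    have : (fun q : Fin (n+1) → ℝ => q ⟨i, by omega⟩)
        = (ContinuousLinearMap.proj (R := ℝ) (φ := fun _ : Fin (n+1) => ℝ)
          (⟨i, by omega⟩ : Fin (n+1))) := rfl
    rw [this, ContinuousLinearMap.fderiv]
    rfl
  -- y components
  have hyc : ∀ a : Fin (n-1), graphMap n y z p ⟨n + (a:ℕ), by omega⟩ = y a p := by
    intro a
    have h1 : ¬ ((n + (a:ℕ) : ℕ) < n) := by omega
    have h2 : (n + (a:ℕ) : ℕ) < 2*n-1 := by have := a.isLt; omega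
    simp only [graphMap, h1, h2, dif_neg, dif_pos, not_false_iff]
    congr 1
    ext
    simp
  have hyn : graphMap n y z p ⟨n + (n-1), by omega⟩ = p (ynIdx n) := by
    have h1 : ¬ ((n + (n-1) : ℕ) < n) := by omega
    have h2 : ¬ ((n + (n-1) : ℕ) < 2*n-1) := by omega
    have h3 : (n + (n-1) : ℕ) = 2*n-1 := by omega
    simp only [graphMap, h3]
    rw [dif_neg (show ¬(2*n-1 < n) by omega), dif_neg (show ¬(2*n-1 < 2*n-1) by omega),
      dif_pos trivial]
  -- expand contactForm
  rw [contactForm]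
  rw [sum_split_fin n (by omega)
    (fun i : Fin n => graphMap n y z p ⟨n + (i:ℕ), by have := i.isLt; omega⟩
      * fderiv ℝ (graphMap n y z) p v ⟨(i:ℕ), by have := i.isLt; omega⟩)]
  have hzexp : fderiv ℝ z p v
      = (∑ a : Fin (n-1), v (xIdx a) * pd (xIdx a) z p)
        + v (xnIdx n) * pd (xnIdx n) z p + v (ynIdx n) * pd (ynIdx n) z p := by
    rw [fderiv_eq_sum_pd (diffAt_of_contDiffOn hU hz hp) v,
      sum_split n hn (fun i => v i * pd i z p)]
  simp only [hz2n, hzexp]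
  have hterm1 : ∀ a : Fin (n-1),
      graphMap n y z p ⟨n + ((Fin.castLE (by omega : n-1 ≤ n) a : Fin n):ℕ), by omega⟩
        * fderiv ℝ (graphMap n y z) p v ⟨((Fin.castLE (by omega : n-1 ≤ n) a : Fin n):ℕ), by omega⟩
      = y a p * v (xIdx a) := by
    intro a
    have e1 : graphMap n y z p ⟨n + ((Fin.castLE (by omega : n-1 ≤ n) a : Fin n):ℕ), by omega⟩
        = y a p := hyc a
    have e2 : fderiv ℝ (graphMap n y z) p v
        ⟨((Fin.castLE (by omega : n-1 ≤ n) a : Fin n):ℕ), by omega⟩ = v (xIdx a) := by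
      have := hcoord (a:ℕ) (by have := a.isLt; omega)
      convert this using 2
      all_goals rfl
    rw [e1, e2]
  have hterm2 : graphMap n y z p ⟨n + (((⟨n-1, by omega⟩ : Fin n)):ℕ), by omega⟩
        * fderiv ℝ (graphMap n y z) p v ⟨(((⟨n-1, by omega⟩ : Fin n)):ℕ), by omega⟩
      = p (ynIdx n) * v (xnIdx n) := by
    have e1 : graphMap n y z p ⟨n + (((⟨n-1, by omega⟩ : Fin n)):ℕ), by omega⟩
        = p (ynIdx n) := hyn
    have e2 : fderiv ℝ (graphMap n y z) p v ⟨(((⟨n-1, by omega⟩ : Fin n)):ℕ), by omega⟩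
        = v (xnIdx n) := by
      have := hcoord (n-1) (by omega)
      convert this using 2
      rfl
    rw [e1, e2]
  have hsum1 : (∑ a : Fin (n-1),
      graphMap n y z p ⟨n + ((Fin.castLE (by omega : n-1 ≤ n) a : Fin n):ℕ), by omega⟩
        * fderiv ℝ (graphMap n y z) p v ⟨((Fin.castLE (by omega : n-1 ≤ n) a : Fin n):ℕ), by omega⟩)
      = ∑ a : Fin (n-1), y a p * v (xIdx a) :=
    Finset.sum_congr rfl fun a _ => hterm1 a
  rw [hsum1, hterm2]
  have hsub : (∑ a : Fin (n-1), (pd (xIdx a) z p - y a p) * v (xIdx a))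
      = (∑ a : Fin (n-1), v (xIdx a) * pd (xIdx a) z p)
        - ∑ a : Fin (n-1), y a p * v (xIdx a) := by
    rw [← Finset.sum_sub_distrib]
    exact Finset.sum_congr rfl fun a _ => by ring
  rw [hsub]
  ring
end graphsec
section coeffsec
variable {n : ℕ} {U : Set (Fin (n+1) → ℝ)}
  {y : Fin (n-1) → (Fin (n+1) → ℝ) → ℝ} {z : (Fin (n+1) → ℝ) → ℝ}

lemma ynIdx_ne_xIdx (a : Fin (n-1)) : ynIdx n ≠ xIdx a := by
  have := a.isLt
  simp only [ynIdx, xIdx, Fin.ne_iff_vne, Fin.castLE]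
  simp
  omega

lemma ynIdx_ne_xnIdx (hn : 2 ≤ n) : ynIdx n ≠ xnIdx n := by
  simp only [ynIdx, xnIdx, Fin.ne_iff_vne]
  omega

lemma pd_E3_expand (hU : IsOpen U)
    (hy : ∀ a, ContDiffOn ℝ (⊤:ℕ∞) (y a) U) (hz : ContDiffOn ℝ (⊤:ℕ∞) z U)
    (hE3 : ∀ a, ∀ p ∈ U, E3 y z a p = 0)
    (k : Fin (n-1)) (j : Fin (n+1)) {p : Fin (n+1) → ℝ} (hp : p ∈ U) :
    pd j (pd (xIdx k) z) p
      - ((pd (xnIdx n) z p - p (ynIdx n)) * pd j (pd (ynIdx n) (y k)) p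
          + pd (ynIdx n) (y k) p * (pd j (pd (xnIdx n) z) p
            - pd j (fun q => q (ynIdx n)) p))
      + (pd (ynIdx n) z p * pd j (pd (xnIdx n) (y k)) p
          + pd (xnIdx n) (y k) p * pd j (pd (ynIdx n) z) p)
      - pd j (y k) p = 0 := by
  have hz1 : ∀ i, DifferentiableAt ℝ (pd i z) p := fun i =>
    diffAt_of_contDiffOn hU (contDiffOn_pd hU hz i) hp
  have hyk1 : ∀ i, DifferentiableAt ℝ (pd i (y k)) p := fun i =>
    diffAt_of_contDiffOn hU (contDiffOn_pd hU (hy k) i) hp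
  have hproj : DifferentiableAt ℝ (fun q : Fin (n+1) → ℝ => q (ynIdx n)) p :=
    (ContinuousLinearMap.proj (R := ℝ) (φ := fun _ : Fin (n+1) => ℝ)
      (ynIdx n)).differentiableAt
  have hyk0 : DifferentiableAt ℝ (y k) p := diffAt_of_contDiffOn hU (hy k) hp
  have hB : DifferentiableAt ℝ (fun q => pd (xnIdx n) z q - q (ynIdx n)) p :=
    (hz1 _).sub hproj
  have hBC : DifferentiableAt ℝ
      (fun q => (pd (xnIdx n) z q - q (ynIdx n)) * pd (ynIdx n) (y k) q) p :=
    hB.mul (hyk1 _)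
  have hDE : DifferentiableAt ℝ
      (fun q => pd (ynIdx n) z q * pd (xnIdx n) (y k) q) p := (hz1 _).mul (hyk1 _)
  have h12 : DifferentiableAt ℝ
      (fun q => pd (xIdx k) z q - (pd (xnIdx n) z q - q (ynIdx n)) * pd (ynIdx n) (y k) q) p :=
    (hz1 _).sub hBC
  have h123 : DifferentiableAt ℝ
      (fun q => pd (xIdx k) z q - (pd (xnIdx n) z q - q (ynIdx n)) * pd (ynIdx n) (y k) q
        + pd (ynIdx n) z q * pd (xnIdx n) (y k) q) p := h12.add hDE
  have h0 : pd j (fun q => E3 y z k q) p = 0 := by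
    rw [pd_congr hU (fun q hq => hE3 k q hq) hp j, pd_const]
  rw [show (fun q => E3 y z k q)
      = fun q => (pd (xIdx k) z q - (pd (xnIdx n) z q - q (ynIdx n)) * pd (ynIdx n) (y k) q
        + pd (ynIdx n) z q * pd (xnIdx n) (y k) q) - y k q from rfl] at h0
  rw [pd_sub j h123 hyk0, pd_add j h12 hDE, pd_sub j (hz1 _) hBC,
    pd_mul j hB (hyk1 _), pd_sub j (hz1 _) hproj, pd_mul j (hz1 _) (hyk1 _)] at h0
  linear_combination h0

lemma coeffA (hn : 2 ≤ n) (hU : IsOpen U)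
    (hy : ∀ a, ContDiffOn ℝ (⊤:ℕ∞) (y a) U) (hz : ContDiffOn ℝ (⊤:ℕ∞) z U)
    (hE1 : ∀ a b, ∀ p ∈ U, E1 y z a b p = 0)
    (hE2 : ∀ a b, ∀ p ∈ U, E2 y z a b p = 0)
    (hE3 : ∀ a, ∀ p ∈ U, E3 y z a p = 0)
    (k a : Fin (n-1)) {p : Fin (n+1) → ℝ} (hp : p ∈ U) :
    (pd (xIdx k) (pd (xIdx a) z) p - pd (xIdx k) (y a) p)
      - pd (ynIdx n) (y k) p * (pd (xnIdx n) (pd (xIdx a) z) p - pd (xnIdx n) (y a) p)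
      + pd (xnIdx n) (y k) p * (pd (ynIdx n) (pd (xIdx a) z) p - pd (ynIdx n) (y a) p)
      - (pd (xnIdx n) z p - p (ynIdx n)) * pd (xIdx a) (pd (ynIdx n) (y k)) p
      + pd (ynIdx n) z p * pd (xIdx a) (pd (xnIdx n) (y k)) p = 0 := by
  have hE := pd_E3_expand hU hy hz hE3 k (xIdx a) hp
  have hlam : Lam y k a p = 0 := lam_zero hn hU hy hz hE1 hE2 hE3 k a p hp
  unfold Lam at hlam
  have hδ : pd (xIdx a) (fun q : Fin (n+1) → ℝ => q (ynIdx n)) p = 0 := by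
    rw [pd_proj, if_neg (ynIdx_ne_xIdx a)]
  have s1 : pd (xIdx k) (pd (xIdx a) z) p = pd (xIdx a) (pd (xIdx k) z) p :=
    pd_comm hU hz hp _ _
  have s2 : pd (xnIdx n) (pd (xIdx a) z) p = pd (xIdx a) (pd (xnIdx n) z) p :=
    pd_comm hU hz hp _ _
  have s3 : pd (ynIdx n) (pd (xIdx a) z) p = pd (xIdx a) (pd (ynIdx n) z) p :=
    pd_comm hU hz hp _ _
  rw [s1, s2, s3]
  rw [hδ] at hE
  linear_combination hE + hlam

lemma coeffB (hn : 2 ≤ n) (hU : IsOpen U)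
    (hy : ∀ a, ContDiffOn ℝ (⊤:ℕ∞) (y a) U) (hz : ContDiffOn ℝ (⊤:ℕ∞) z U)
    (hE3 : ∀ a, ∀ p ∈ U, E3 y z a p = 0)
    (k : Fin (n-1)) {p : Fin (n+1) → ℝ} (hp : p ∈ U) :
    (pd (xIdx k) (pd (xnIdx n) z) p - 0)
      - pd (ynIdx n) (y k) p * (pd (xnIdx n) (pd (xnIdx n) z) p - 0)
      + pd (xnIdx n) (y k) p * (pd (ynIdx n) (pd (xnIdx n) z) p - 1)
      - (pd (xnIdx n) z p - p (ynIdx n)) * pd (xnIdx n) (pd (ynIdx n) (y k)) p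
      + pd (ynIdx n) z p * pd (xnIdx n) (pd (xnIdx n) (y k)) p = 0 := by
  have hE := pd_E3_expand hU hy hz hE3 k (xnIdx n) hp
  have hδ : pd (xnIdx n) (fun q : Fin (n+1) → ℝ => q (ynIdx n)) p = 0 := by
    rw [pd_proj, if_neg (ynIdx_ne_xnIdx hn)]
  have hDk : pd (xnIdx n) (y k) p = pd (xnIdx n) (y k) p := rfl
  have s1 : pd (xIdx k) (pd (xnIdx n) z) p = pd (xnIdx n) (pd (xIdx k) z) p :=
    pd_comm hU hz hp _ _
  have s2 : pd (ynIdx n) (pd (xnIdx n) z) p = pd (xnIdx n) (pd (ynIdx n) z) p :=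
    pd_comm hU hz hp _ _
  rw [s1, s2]
  rw [hδ] at hE
  linear_combination hE

lemma coeffC (hn : 2 ≤ n) (hU : IsOpen U)
    (hy : ∀ a, ContDiffOn ℝ (⊤:ℕ∞) (y a) U) (hz : ContDiffOn ℝ (⊤:ℕ∞) z U)
    (hE3 : ∀ a, ∀ p ∈ U, E3 y z a p = 0)
    (k : Fin (n-1)) {p : Fin (n+1) → ℝ} (hp : p ∈ U) :
    pd (xIdx k) (pd (ynIdx n) z) p
      - pd (ynIdx n) (y k) p * pd (xnIdx n) (pd (ynIdx n) z) p
      + pd (xnIdx n) (y k) p * pd (ynIdx n) (pd (ynIdx n) z) p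
      - (pd (xnIdx n) z p - p (ynIdx n)) * pd (ynIdx n) (pd (ynIdx n) (y k)) p
      + pd (ynIdx n) z p * pd (ynIdx n) (pd (xnIdx n) (y k)) p = 0 := by
  have hE := pd_E3_expand hU hy hz hE3 k (ynIdx n) hp
  have hδ : pd (ynIdx n) (fun q : Fin (n+1) → ℝ => q (ynIdx n)) p = 1 := by
    rw [pd_proj, if_pos rfl]
  have s1 : pd (xIdx k) (pd (ynIdx n) z) p = pd (ynIdx n) (pd (xIdx k) z) p :=
    pd_comm hU hz hp _ _
  have s2 : pd (xnIdx n) (pd (ynIdx n) z) p = pd (ynIdx n) (pd (xnIdx n) z) p :=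
    pd_comm hU hz hp _ _
  have s3 : pd (ynIdx n) (y k) p = pd (ynIdx n) (y k) p := rfl
  rw [s1, s2]
  rw [hδ] at hE
  linear_combination hE
end coeffsec
section vtsec
variable {n : ℕ} {U : Set (Fin (n+1) → ℝ)}
  {y : Fin (n-1) → (Fin (n+1) → ℝ) → ℝ} {z : (Fin (n+1) → ℝ) → ℝ}

lemma xIdx_ne_xnIdx (a : Fin (n-1)) : xIdx a ≠ xnIdx n := by
  have := a.isLt
  simp only [xIdx, xnIdx, Fin.ne_iff_vne, Fin.castLE]
  simpa using (by omega : ¬ ((a:ℕ) = n - 1))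

lemma xIdx_ne_ynIdx (a : Fin (n-1)) : xIdx a ≠ ynIdx n := (ynIdx_ne_xIdx a).symm

lemma clm_Vt (k : Fin (n-1)) {p : Fin (n+1) → ℝ} (h : (Fin (n+1) → ℝ) → ℝ) :
    fderiv ℝ h p (Vt n y k p)
      = pd (xIdx k) h p - pd (ynIdx n) (y k) p * pd (xnIdx n) h p
        + pd (xnIdx n) (y k) p * pd (ynIdx n) h p := by
  unfold Vt pd
  rw [map_add, map_sub, map_smul, map_smul]
  simp [smul_eq_mul]

lemma Vt_comp_eq (k : Fin (n-1)) (i : Fin (n+1)) :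
    (fun q => Vt n y k q i)
      = fun q => (Pi.single (xIdx k) (1:ℝ) : Fin (n+1) → ℝ) i - pd (ynIdx n) (y k) q * (Pi.single (xnIdx n) (1:ℝ) : Fin (n+1) → ℝ) i
          + pd (xnIdx n) (y k) q * (Pi.single (ynIdx n) (1:ℝ) : Fin (n+1) → ℝ) i := by
  funext q
  simp [Vt, smul_eq_mul]

lemma fderiv_Vt_apply (hU : IsOpen U) (hy : ∀ a, ContDiffOn ℝ (⊤:ℕ∞) (y a) U)
    (k : Fin (n-1)) {p : Fin (n+1) → ℝ} (hp : p ∈ U) (v : Fin (n+1) → ℝ) (i : Fin (n+1)) :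
    fderiv ℝ (Vt n y k) p v i
      = -(fderiv ℝ (pd (ynIdx n) (y k)) p v) * (Pi.single (xnIdx n) (1:ℝ) : Fin (n+1) → ℝ) i
        + fderiv ℝ (pd (xnIdx n) (y k)) p v * (Pi.single (ynIdx n) (1:ℝ) : Fin (n+1) → ℝ) i := by
  have hCk : DifferentiableAt ℝ (pd (ynIdx n) (y k)) p :=
    diffAt_of_contDiffOn hU (contDiffOn_pd hU (hy k) _) hp
  have hDk : DifferentiableAt ℝ (pd (xnIdx n) (y k)) p :=
    diffAt_of_contDiffOn hU (contDiffOn_pd hU (hy k) _) hp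
  have hcomp : ∀ j, DifferentiableAt ℝ (fun q => Vt n y k q j) p := by
    intro j
    rw [Vt_comp_eq k j]
    exact ((differentiableAt_const _).sub (hCk.mul_const _)).add (hDk.mul_const _)
  have hpi : fderiv ℝ (Vt n y k) p
      = ContinuousLinearMap.pi (fun j => fderiv ℝ (fun q => Vt n y k q j) p) :=
    fderiv_pi hcomp
  rw [hpi]
  simp only [ContinuousLinearMap.pi_apply]
  have h1 : HasFDerivAt
      (fun q => (Pi.single (xIdx k) (1:ℝ) : Fin (n+1) → ℝ) i - pd (ynIdx n) (y k) q * (Pi.single (xnIdx n) (1:ℝ) : Fin (n+1) → ℝ) i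
          + pd (xnIdx n) (y k) q * (Pi.single (ynIdx n) (1:ℝ) : Fin (n+1) → ℝ) i)
      (-((Pi.single (xnIdx n) (1:ℝ) : Fin (n+1) → ℝ) i • fderiv ℝ (pd (ynIdx n) (y k)) p)
        + (Pi.single (ynIdx n) (1:ℝ) : Fin (n+1) → ℝ) i • fderiv ℝ (pd (xnIdx n) (y k)) p) p := by
    exact ((hCk.hasFDerivAt.mul_const _).const_sub _).add (hDk.hasFDerivAt.mul_const _)
  rw [show (fun q => Vt n y k q i)
      = fun q => (Pi.single (xIdx k) (1:ℝ) : Fin (n+1) → ℝ) i - pd (ynIdx n) (y k) q * (Pi.single (xnIdx n) (1:ℝ) : Fin (n+1) → ℝ) i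
          + pd (xnIdx n) (y k) q * (Pi.single (ynIdx n) (1:ℝ) : Fin (n+1) → ℝ) i from Vt_comp_eq k i]
  rw [h1.fderiv]
  simp [smul_eq_mul]
  ring

lemma fderiv_Vt_xIdx (hU : IsOpen U) (hy : ∀ a, ContDiffOn ℝ (⊤:ℕ∞) (y a) U)
    (k : Fin (n-1)) {p : Fin (n+1) → ℝ} (hp : p ∈ U) (v : Fin (n+1) → ℝ) (a : Fin (n-1)) :
    fderiv ℝ (Vt n y k) p v (xIdx a) = 0 := by
  rw [fderiv_Vt_apply hU hy k hp v (xIdx a)]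
  rw [Pi.single_apply, Pi.single_apply, if_neg (xIdx_ne_xnIdx a), if_neg (xIdx_ne_ynIdx a)]
  ring

lemma fderiv_Vt_xn (hn : 2 ≤ n) (hU : IsOpen U) (hy : ∀ a, ContDiffOn ℝ (⊤:ℕ∞) (y a) U)
    (k : Fin (n-1)) {p : Fin (n+1) → ℝ} (hp : p ∈ U) (v : Fin (n+1) → ℝ) :
    fderiv ℝ (Vt n y k) p v (xnIdx n) = -(fderiv ℝ (pd (ynIdx n) (y k)) p v) := by
  rw [fderiv_Vt_apply hU hy k hp v (xnIdx n)]
  rw [Pi.single_apply, Pi.single_apply, if_pos rfl, if_neg (ynIdx_ne_xnIdx hn).symm]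
  ring

lemma fderiv_Vt_yn (hn : 2 ≤ n) (hU : IsOpen U) (hy : ∀ a, ContDiffOn ℝ (⊤:ℕ∞) (y a) U)
    (k : Fin (n-1)) {p : Fin (n+1) → ℝ} (hp : p ∈ U) (v : Fin (n+1) → ℝ) :
    fderiv ℝ (Vt n y k) p v (ynIdx n) = fderiv ℝ (pd (xnIdx n) (y k)) p v := by
  rw [fderiv_Vt_apply hU hy k hp v (ynIdx n)]
  rw [Pi.single_apply, Pi.single_apply, if_neg (ynIdx_ne_xnIdx hn), if_pos rfl]
  ring
end vtsec
section mainsec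
variable {n : ℕ} {U : Set (Fin (n+1) → ℝ)}
  {y : Fin (n-1) → (Fin (n+1) → ℝ) → ℝ} {z : (Fin (n+1) → ℝ) → ℝ}

lemma deriv_zero_aux (hn : 2 ≤ n) (hU : IsOpen U)
    (hy : ∀ a, ContDiffOn ℝ (⊤:ℕ∞) (y a) U) (hz : ContDiffOn ℝ (⊤:ℕ∞) z U)
    (hE1 : ∀ a b, ∀ p ∈ U, E1 y z a b p = 0)
    (hE2 : ∀ a b, ∀ p ∈ U, E2 y z a b p = 0)
    (hE3 : ∀ a, ∀ p ∈ U, E3 y z a p = 0)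
    (k : Fin (n-1)) (γ w : ℝ → Fin (n+1) → ℝ) (t : ℝ) (hp : γ t ∈ U)
    (hγt : HasDerivAt γ (Vt n y k (γ t)) t)
    (hwt : HasDerivAt w (fderiv ℝ (Vt n y k) (γ t) (w t)) t) :
    HasDerivAt (fun s => (∑ a : Fin (n-1), (pd (xIdx a) z (γ s) - y a (γ s)) * w s (xIdx a))
      + (pd (xnIdx n) z (γ s) - γ s (ynIdx n)) * w s (xnIdx n)
      + pd (ynIdx n) z (γ s) * w s (ynIdx n)) 0 t := by
  have hzd : ∀ i, DifferentiableAt ℝ (pd i z) (γ t) := fun i =>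
    diffAt_of_contDiffOn hU (contDiffOn_pd hU hz i) hp
  have hyd : ∀ a, DifferentiableAt ℝ (y a) (γ t) := fun a => diffAt_of_contDiffOn hU (hy a) hp
  have hproj : DifferentiableAt ℝ (fun q : Fin (n+1) → ℝ => q (ynIdx n)) (γ t) :=
    (ContinuousLinearMap.proj (R := ℝ) (φ := fun _ : Fin (n+1) => ℝ) (ynIdx n)).differentiableAt
  have hCk : DifferentiableAt ℝ (pd (ynIdx n) (y k)) (γ t) :=
    diffAt_of_contDiffOn hU (contDiffOn_pd hU (hy k) _) hp
  have hDk : DifferentiableAt ℝ (pd (xnIdx n) (y k)) (γ t) :=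
    diffAt_of_contDiffOn hU (contDiffOn_pd hU (hy k) _) hp
  have hwc : ∀ i, HasDerivAt (fun s => w s i) (fderiv ℝ (Vt n y k) (γ t) (w t) i) t := fun i =>
    (ContinuousLinearMap.proj (R := ℝ) (φ := fun _ : Fin (n+1) => ℝ)
      i).hasFDerivAt.comp_hasDerivAt t hwt
  have h1 : HasDerivAt (fun s => ∑ a : Fin (n-1), (pd (xIdx a) z (γ s) - y a (γ s)) * w s (xIdx a))
      (∑ a : Fin (n-1),
        (fderiv ℝ (fun q => pd (xIdx a) z q - y a q) (γ t) (Vt n y k (γ t)) * w t (xIdx a)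
          + (pd (xIdx a) z (γ t) - y a (γ t)) * fderiv ℝ (Vt n y k) (γ t) (w t) (xIdx a))) t := by
    apply HasDerivAt.fun_sum
    intro a _
    exact (((hzd (xIdx a)).sub (hyd a)).hasFDerivAt.comp_hasDerivAt t hγt).mul (hwc (xIdx a))
  have h2 : HasDerivAt (fun s => (pd (xnIdx n) z (γ s) - γ s (ynIdx n)) * w s (xnIdx n))
      (fderiv ℝ (fun q => pd (xnIdx n) z q - q (ynIdx n)) (γ t) (Vt n y k (γ t)) * w t (xnIdx n)
        + (pd (xnIdx n) z (γ t) - γ t (ynIdx n)) * fderiv ℝ (Vt n y k) (γ t) (w t) (xnIdx n)) t :=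
    (((hzd (xnIdx n)).sub hproj).hasFDerivAt.comp_hasDerivAt t hγt).mul (hwc (xnIdx n))
  have h3 : HasDerivAt (fun s => pd (ynIdx n) z (γ s) * w s (ynIdx n))
      (fderiv ℝ (pd (ynIdx n) z) (γ t) (Vt n y k (γ t)) * w t (ynIdx n)
        + pd (ynIdx n) z (γ t) * fderiv ℝ (Vt n y k) (γ t) (w t) (ynIdx n)) t :=
    ((hzd (ynIdx n)).hasFDerivAt.comp_hasDerivAt t hγt).mul (hwc (ynIdx n))
  have htot := (h1.add h2).add h3
  have e1 : ∀ a : Fin (n-1), fderiv ℝ (Vt n y k) (γ t) (w t) (xIdx a) = 0 :=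
    fderiv_Vt_xIdx hU hy k hp (w t)
  have exn := fderiv_Vt_xn hn hU hy k hp (w t)
  have eyn := fderiv_Vt_yn hn hU hy k hp (w t)
  have eCk : fderiv ℝ (pd (ynIdx n) (y k)) (γ t) (w t)
      = (∑ a : Fin (n-1), w t (xIdx a) * pd (xIdx a) (pd (ynIdx n) (y k)) (γ t))
        + w t (xnIdx n) * pd (xnIdx n) (pd (ynIdx n) (y k)) (γ t)
        + w t (ynIdx n) * pd (ynIdx n) (pd (ynIdx n) (y k)) (γ t) := by
    rw [fderiv_eq_sum_pd hCk (w t), sum_split n hn (fun i => w t i * pd i (pd (ynIdx n) (y k)) (γ t))]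
  have eDk : fderiv ℝ (pd (xnIdx n) (y k)) (γ t) (w t)
      = (∑ a : Fin (n-1), w t (xIdx a) * pd (xIdx a) (pd (xnIdx n) (y k)) (γ t))
        + w t (xnIdx n) * pd (xnIdx n) (pd (xnIdx n) (y k)) (γ t)
        + w t (ynIdx n) * pd (ynIdx n) (pd (xnIdx n) (y k)) (γ t) := by
    rw [fderiv_eq_sum_pd hDk (w t), sum_split n hn (fun i => w t i * pd i (pd (xnIdx n) (y k)) (γ t))]
  have fA : ∀ a : Fin (n-1),
      fderiv ℝ (fun q => pd (xIdx a) z q - y a q) (γ t) (Vt n y k (γ t))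
        = (pd (xIdx k) (pd (xIdx a) z) (γ t) - pd (xIdx k) (y a) (γ t))
          - pd (ynIdx n) (y k) (γ t) * (pd (xnIdx n) (pd (xIdx a) z) (γ t) - pd (xnIdx n) (y a) (γ t))
          + pd (xnIdx n) (y k) (γ t) * (pd (ynIdx n) (pd (xIdx a) z) (γ t) - pd (ynIdx n) (y a) (γ t)) := by
    intro a
    rw [clm_Vt k _, pd_sub _ (hzd _) (hyd a), pd_sub _ (hzd _) (hyd a), pd_sub _ (hzd _) (hyd a)]
  have fB : fderiv ℝ (fun q => pd (xnIdx n) z q - q (ynIdx n)) (γ t) (Vt n y k (γ t))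
      = (pd (xIdx k) (pd (xnIdx n) z) (γ t) - 0)
        - pd (ynIdx n) (y k) (γ t) * (pd (xnIdx n) (pd (xnIdx n) z) (γ t) - 0)
        + pd (xnIdx n) (y k) (γ t) * (pd (ynIdx n) (pd (xnIdx n) z) (γ t) - 1) := by
    rw [clm_Vt k _, pd_sub _ (hzd _) hproj, pd_sub _ (hzd _) hproj, pd_sub _ (hzd _) hproj,
      pd_proj, pd_proj, pd_proj, if_neg (ynIdx_ne_xIdx k), if_neg (ynIdx_ne_xnIdx hn), if_pos rfl]
  have fC : fderiv ℝ (pd (ynIdx n) z) (γ t) (Vt n y k (γ t))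
      = pd (xIdx k) (pd (ynIdx n) z) (γ t)
        - pd (ynIdx n) (y k) (γ t) * pd (xnIdx n) (pd (ynIdx n) z) (γ t)
        + pd (xnIdx n) (y k) (γ t) * pd (ynIdx n) (pd (ynIdx n) z) (γ t) := clm_Vt k _
  have hKey : (∑ a : Fin (n-1),
        (fderiv ℝ (fun q => pd (xIdx a) z q - y a q) (γ t) (Vt n y k (γ t)) * w t (xIdx a)
          + (pd (xIdx a) z (γ t) - y a (γ t)) * fderiv ℝ (Vt n y k) (γ t) (w t) (xIdx a)))
      - (pd (xnIdx n) z (γ t) - γ t (ynIdx n))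
          * (∑ a : Fin (n-1), w t (xIdx a) * pd (xIdx a) (pd (ynIdx n) (y k)) (γ t))
      + pd (ynIdx n) z (γ t)
          * (∑ a : Fin (n-1), w t (xIdx a) * pd (xIdx a) (pd (xnIdx n) (y k)) (γ t)) = 0 := by
    rw [Finset.mul_sum, Finset.mul_sum, ← Finset.sum_sub_distrib, ← Finset.sum_add_distrib]
    apply Finset.sum_eq_zero
    intro a _
    rw [e1 a, fA a]
    have hco := coeffA hn hU hy hz hE1 hE2 hE3 k a hp
    linear_combination (w t (xIdx a)) * hco
  have hzero : (∑ a : Fin (n-1),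
        (fderiv ℝ (fun q => pd (xIdx a) z q - y a q) (γ t) (Vt n y k (γ t)) * w t (xIdx a)
          + (pd (xIdx a) z (γ t) - y a (γ t)) * fderiv ℝ (Vt n y k) (γ t) (w t) (xIdx a)))
      + (fderiv ℝ (fun q => pd (xnIdx n) z q - q (ynIdx n)) (γ t) (Vt n y k (γ t)) * w t (xnIdx n)
        + (pd (xnIdx n) z (γ t) - γ t (ynIdx n)) * fderiv ℝ (Vt n y k) (γ t) (w t) (xnIdx n))
      + (fderiv ℝ (pd (ynIdx n) z) (γ t) (Vt n y k (γ t)) * w t (ynIdx n)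
        + pd (ynIdx n) z (γ t) * fderiv ℝ (Vt n y k) (γ t) (w t) (ynIdx n)) = 0 := by
    rw [exn, eyn, eCk, eDk, fB, fC]
    have hcoB := coeffB hn hU hy hz hE3 k hp
    have hcoC := coeffC hn hU hy hz hE3 k hp
    linear_combination hKey + (w t (xnIdx n)) * hcoB + (w t (ynIdx n)) * hcoC
  rw [hzero] at htot
  exact htot
end mainsec

/-- The flow of `Ṽ_k` preserves the pulled-back contact form
`μ = F*α`: along an integral curve `γ` of `Ṽ_k` and a solution `w` of the linearized
equation, `t ↦ μ_{γ(t)}(w(t))` is constant. -/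
theorem flow_preserves_restricted_form (n : ℕ) (hn : 2 ≤ n) (U : Set (Fin (n + 1) → ℝ)) (hU : IsOpen U)
    (y : Fin (n - 1) → (Fin (n + 1) → ℝ) → ℝ) (z : (Fin (n + 1) → ℝ) → ℝ)
    (hy : ∀ a, ContDiffOn ℝ (⊤ : ℕ∞) (y a) U) (hz : ContDiffOn ℝ (⊤ : ℕ∞) z U)
    (hE1 : ∀ a b, ∀ p ∈ U, E1 y z a b p = 0)
    (hE2 : ∀ a b, ∀ p ∈ U, E2 y z a b p = 0)
    (hE3 : ∀ a, ∀ p ∈ U, E3 y z a p = 0)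
    (k : Fin (n - 1)) (I : Set ℝ) (hI : I.OrdConnected)
    (γ w : ℝ → Fin (n + 1) → ℝ)
    (hγU : ∀ t ∈ I, γ t ∈ U)
    (hγ : ∀ t ∈ I, HasDerivAt γ (Vt n y k (γ t)) t)
    (hw : ∀ t ∈ I, HasDerivAt w (fderiv ℝ (Vt n y k) (γ t) (w t)) t) :
    ∀ t ∈ I, ∀ t' ∈ I,
      contactForm n (graphMap n y z (γ t)) (fderiv ℝ (graphMap n y z) (γ t) (w t)) =
        contactForm n (graphMap n y z (γ t')) (fderiv ℝ (graphMap n y z) (γ t') (w t')) := by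
  set g : ℝ → ℝ := fun s => (∑ a : Fin (n-1), (pd (xIdx a) z (γ s) - y a (γ s)) * w s (xIdx a))
      + (pd (xnIdx n) z (γ s) - γ s (ynIdx n)) * w s (xnIdx n)
      + pd (ynIdx n) z (γ s) * w s (ynIdx n) with hgdef
  have hg0 : ∀ t ∈ I, HasDerivAt g 0 t := fun t ht =>
    deriv_zero_aux hn hU hy hz hE1 hE2 hE3 k γ w t (hγU t ht) (hγ t ht) (hw t ht)
  have hconv : Convex ℝ I := hI.convex
  have hzeromap : (ContinuousLinearMap.toSpanSingleton ℝ (0:ℝ)) = 0 := by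
    ext x; simp
  have hfd : ∀ t ∈ I, HasFDerivWithinAt g (0 : ℝ →L[ℝ] ℝ) I t := by
    intro t ht
    have := (hg0 t ht).hasFDerivAt
    rw [hzeromap] at this
    exact this.hasFDerivWithinAt
  have hconst : ∀ t ∈ I, ∀ t' ∈ I, g t = g t' := by
    intro t ht t' ht'
    have hb := hconv.norm_image_sub_le_of_norm_hasFDerivWithin_le
      (C := 0) (f' := fun _ => (0 : ℝ →L[ℝ] ℝ)) (fun x hx => hfd x hx)
      (fun x _ => by simp) ht' ht
    simp only [norm_zero, zero_mul] at hb
    have : ‖g t - g t'‖ ≤ 0 := by simpa using hb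
    have h2 : g t - g t' = 0 := by
      have := norm_le_zero_iff.1 this
      exact this
    linarith [h2]
  intro t ht t' ht'
  rw [graph_contact hn hU hy hz (hγU t ht) (w t), graph_contact hn hU hy hz (hγU t' ht') (w t')]
  exact hconst t ht t' ht'
end

section
/- Let n ≥ 2, let U ⊆ ℝ^{n+1} be open, and let y_1,…,y_{n−1}, z : U → ℝ be smooth functions satisfying equations (E1), (E2), (E3) at every point of U. Let μ = F*α be the pull-back of the standard contact form under the graph map, and fix 1 ≤ k ≤ n−1. If γ : I → U is an integral curve of Ṽ_k and μ_{γ(t_0)} = 0 (as a linear functional on ℝ^{n+1}) for some t_0 ∈ I, then μ_{γ(t)} = 0 for all t ∈ I. In other words, the singular locus S = {p ∈ U : μ_p = 0} is invariant under the flows of the vector fields Ṽ_1,…,Ṽ_{n−1}. -/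
open scoped BigOperators

open Set Filter Topology

section SLIAux0
variable {m : ℕ}

lemma SLI.top_add_one : ((⊤:ℕ∞) : WithTop ℕ∞) + 1 ≤ ((⊤:ℕ∞) : WithTop ℕ∞) := by
  exact_mod_cast le_top

lemma SLI.one_le_top : (1 : WithTop ℕ∞) ≤ ((⊤:ℕ∞) : WithTop ℕ∞) := by exact_mod_cast le_top

lemma SLI.hasFDerivAt_fderiv {f : (Fin m → ℝ) → ℝ} {U : Set (Fin m → ℝ)}
    (hU : IsOpen U) (hf : ContDiffOn ℝ (⊤:ℕ∞) f U) {p} (hp : p ∈ U) :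
    HasFDerivAt (fderiv ℝ f) (fderiv ℝ (fderiv ℝ f) p) p := by
  have h := (hf.contDiffAt (hU.mem_nhds hp)).fderiv_right (m := ((⊤:ℕ∞) : WithTop ℕ∞))
    SLI.top_add_one
  exact (h.differentiableAt (zero_lt_one.trans_le SLI.one_le_top).ne').hasFDerivAt

lemma SLI.hasFDerivAt_pd {f : (Fin m → ℝ) → ℝ} {U : Set (Fin m → ℝ)}
    (hU : IsOpen U) (hf : ContDiffOn ℝ (⊤:ℕ∞) f U) {p} (hp : p ∈ U) (i : Fin m) :
    HasFDerivAt (pd i f)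
      ((ContinuousLinearMap.apply ℝ ℝ (Pi.single i 1)).comp (fderiv ℝ (fderiv ℝ f) p)) p := by
  have h := (ContinuousLinearMap.apply ℝ ℝ (Pi.single i 1)).hasFDerivAt.comp p
    (SLI.hasFDerivAt_fderiv hU hf hp)
  exact h

lemma SLI.schwarz {f : (Fin m → ℝ) → ℝ} {U : Set (Fin m → ℝ)}
    (hU : IsOpen U) (hf : ContDiffOn ℝ (⊤:ℕ∞) f U) {p} (hp : p ∈ U) (v w : Fin m → ℝ) :
    fderiv ℝ (fderiv ℝ f) p v w = fderiv ℝ (fderiv ℝ f) p w v := by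
  apply second_derivative_symmetric_of_eventually (f := f) (f' := fderiv ℝ f)
    ?_ (SLI.hasFDerivAt_fderiv hU hf hp) v w
  filter_upwards [hU.mem_nhds hp] with q hq
  exact ((hf.contDiffAt (hU.mem_nhds hq)).differentiableAt (zero_lt_one.trans_le SLI.one_le_top).ne').hasFDerivAt

lemma SLI.contAt_D2 {f : (Fin m → ℝ) → ℝ} {U : Set (Fin m → ℝ)}
    (hU : IsOpen U) (hf : ContDiffOn ℝ (⊤:ℕ∞) f U) {p} (hp : p ∈ U) (v w : Fin m → ℝ) :
    ContinuousAt (fun q => fderiv ℝ (fderiv ℝ f) q v w) p := by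
  have h1 : ContDiffAt ℝ ((⊤:ℕ∞) : WithTop ℕ∞) (fderiv ℝ (fderiv ℝ f)) p :=
    ((hf.contDiffAt (hU.mem_nhds hp)).fderiv_right SLI.top_add_one).fderiv_right SLI.top_add_one
  have h2 : Continuous (fun T : (Fin m → ℝ) →L[ℝ] ((Fin m → ℝ) →L[ℝ] ℝ) => T v w) :=
    (ContinuousLinearMap.apply ℝ ℝ w).continuous.comp
      (ContinuousLinearMap.apply ℝ ((Fin m → ℝ) →L[ℝ] ℝ) v).continuous
  exact h2.continuousAt.comp h1.continuousAt

end SLIAux0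

section SLIAux
variable {n : ℕ} {U : Set (Fin (n+1) → ℝ)}
  {y : Fin (n-1) → (Fin (n+1) → ℝ) → ℝ} {z : (Fin (n+1) → ℝ) → ℝ}

lemma SLI.dE3 (hU : IsOpen U) (hy : ∀ a, ContDiffOn ℝ (⊤:ℕ∞) (y a) U)
    (hz : ContDiffOn ℝ (⊤:ℕ∞) z U) (hE3 : ∀ a, ∀ p ∈ U, E3 y z a p = 0)
    (k : Fin (n-1)) {p} (hp : p ∈ U) (w : Fin (n+1) → ℝ) :
    fderiv ℝ (fderiv ℝ z) p w (Pi.single (xIdx k) 1)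
      - (fderiv ℝ (fderiv ℝ z) p w (Pi.single (xnIdx n) 1) - w (ynIdx n))
          * pd (ynIdx n) (y k) p
      - (pd (xnIdx n) z p - p (ynIdx n)) * fderiv ℝ (fderiv ℝ (y k)) p w (Pi.single (ynIdx n) 1)
      + fderiv ℝ (fderiv ℝ z) p w (Pi.single (ynIdx n) 1) * pd (xnIdx n) (y k) p
      + pd (ynIdx n) z p * fderiv ℝ (fderiv ℝ (y k)) p w (Pi.single (xnIdx n) 1)
      - fderiv ℝ (y k) p w = 0 := by
  have hyk : HasFDerivAt (y k) (fderiv ℝ (y k) p) p :=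
    (((hy k).contDiffAt (hU.mem_nhds hp)).differentiableAt (zero_lt_one.trans_le SLI.one_le_top).ne').hasFDerivAt
  have hB : HasFDerivAt (fun q => pd (xnIdx n) z q - q (ynIdx n))
      ((ContinuousLinearMap.apply ℝ ℝ (Pi.single (xnIdx n) 1)).comp (fderiv ℝ (fderiv ℝ z) p)
        - ContinuousLinearMap.proj (ynIdx n)) p :=
    (SLI.hasFDerivAt_pd hU hz hp _).sub (hasFDerivAt_apply (ynIdx n) p)
  have hg := SLI.hasFDerivAt_pd hU (hy k) hp (ynIdx n)
  have hC := SLI.hasFDerivAt_pd hU hz hp (ynIdx n)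
  have hf := SLI.hasFDerivAt_pd hU (hy k) hp (xnIdx n)
  have h1 := SLI.hasFDerivAt_pd hU hz hp (xIdx k)
  have htot := ((h1.sub (hB.mul hg)).add (hC.mul hf)).sub hyk
  have htot' : HasFDerivAt (E3 y z k) _ p := htot
  have hzero : fderiv ℝ (E3 y z k) p = 0 := by
    have he : E3 y z k =ᶠ[𝓝 p] fun _ => (0:ℝ) :=
      Filter.eventuallyEq_of_mem (hU.mem_nhds hp) (fun q hq => hE3 k q hq)
    rw [he.fderiv_eq]
    exact fderiv_const_apply 0
  have hL0 := htot'.fderiv.symm.trans hzero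
  have hw := DFunLike.congr_fun hL0 w
  simp only [ContinuousLinearMap.coe_sub', ContinuousLinearMap.add_apply, Pi.sub_apply,
    ContinuousLinearMap.coe_smul', Pi.smul_apply, smul_eq_mul,
    ContinuousLinearMap.coe_comp', Function.comp_apply, ContinuousLinearMap.apply_apply,
    ContinuousLinearMap.proj_apply, ContinuousLinearMap.add_apply,
    ContinuousLinearMap.zero_apply] at hw
  linear_combination hw
end SLIAux
section SLIAux2
variable {n : ℕ} {U : Set (Fin (n+1) → ℝ)}
  {y : Fin (n-1) → (Fin (n+1) → ℝ) → ℝ} {z : (Fin (n+1) → ℝ) → ℝ}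

lemma SLI.ne_yx (hn : 2 ≤ n) (k : Fin (n-1)) : (ynIdx n) ≠ xIdx k := by
  have := k.isLt
  intro h
  have := congrArg Fin.val h
  simp [ynIdx, xIdx] at this
  omega

lemma SLI.ne_yxn (hn : 2 ≤ n) : (ynIdx n) ≠ xnIdx n := by
  intro h
  have := congrArg Fin.val h
  simp [ynIdx, xnIdx] at this
  omega

lemma SLI.Vt_apply_yn (hn : 2 ≤ n) (k : Fin (n-1)) (p : Fin (n+1) → ℝ) :
    Vt n y k p (ynIdx n) = pd (xnIdx n) (y k) p := by
  simp [Vt, Pi.single_eq_of_ne (SLI.ne_yx hn k), Pi.single_eq_of_ne (SLI.ne_yxn hn)]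

lemma SLI.D2_Vt (hU : IsOpen U) (hz : ContDiffOn ℝ (⊤:ℕ∞) z U)
    {p} (hp : p ∈ U) (k : Fin (n-1)) (w : Fin (n+1) → ℝ) :
    fderiv ℝ (fderiv ℝ z) p (Vt n y k p) w
      = fderiv ℝ (fderiv ℝ z) p (Pi.single (xIdx k) 1) w
        - pd (ynIdx n) (y k) p * fderiv ℝ (fderiv ℝ z) p (Pi.single (xnIdx n) 1) w
        + pd (xnIdx n) (y k) p * fderiv ℝ (fderiv ℝ z) p (Pi.single (ynIdx n) 1) w := by
  simp [Vt, map_add, map_sub, map_smul, ContinuousLinearMap.add_apply,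
    ContinuousLinearMap.sub_apply, ContinuousLinearMap.coe_smul', Pi.smul_apply, smul_eq_mul]

/-- `Ṽ_k B = (∂²y_k/∂x_n∂y_n) B - (∂²y_k/∂x_n²) C` -/
lemma SLI.VB (hn : 2 ≤ n) (hU : IsOpen U) (hy : ∀ a, ContDiffOn ℝ (⊤:ℕ∞) (y a) U)
    (hz : ContDiffOn ℝ (⊤:ℕ∞) z U) (hE3 : ∀ a, ∀ p ∈ U, E3 y z a p = 0)
    (k : Fin (n-1)) {p} (hp : p ∈ U) :
    fderiv ℝ (fderiv ℝ z) p (Vt n y k p) (Pi.single (xnIdx n) 1) - Vt n y k p (ynIdx n)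
      = fderiv ℝ (fderiv ℝ (y k)) p (Pi.single (xnIdx n) 1) (Pi.single (ynIdx n) 1)
          * (pd (xnIdx n) z p - p (ynIdx n))
        - fderiv ℝ (fderiv ℝ (y k)) p (Pi.single (xnIdx n) 1) (Pi.single (xnIdx n) 1)
          * pd (ynIdx n) z p := by
  have hd := SLI.dE3 hU hy hz hE3 k hp (Pi.single (xnIdx n) 1)
  rw [show fderiv ℝ (y k) p (Pi.single (xnIdx n) 1) = pd (xnIdx n) (y k) p from rfl] at hd
  rw [Pi.single_eq_of_ne (SLI.ne_yxn hn)] at hd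
  have s1 := SLI.schwarz hU hz hp (Pi.single (xIdx k) 1) (Pi.single (xnIdx n) 1)
  have s2 := SLI.schwarz hU hz hp (Pi.single (ynIdx n) 1) (Pi.single (xnIdx n) 1)
  rw [SLI.D2_Vt hU hz hp, SLI.Vt_apply_yn hn]
  linear_combination hd + s1 + pd (xnIdx n) (y k) p * s2

/-- `Ṽ_k C = (∂²y_k/∂y_n²) B - (∂²y_k/∂y_n∂x_n) C` -/
lemma SLI.VC (hn : 2 ≤ n) (hU : IsOpen U) (hy : ∀ a, ContDiffOn ℝ (⊤:ℕ∞) (y a) U)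
    (hz : ContDiffOn ℝ (⊤:ℕ∞) z U) (hE3 : ∀ a, ∀ p ∈ U, E3 y z a p = 0)
    (k : Fin (n-1)) {p} (hp : p ∈ U) :
    fderiv ℝ (fderiv ℝ z) p (Vt n y k p) (Pi.single (ynIdx n) 1)
      = fderiv ℝ (fderiv ℝ (y k)) p (Pi.single (ynIdx n) 1) (Pi.single (ynIdx n) 1)
          * (pd (xnIdx n) z p - p (ynIdx n))
        - fderiv ℝ (fderiv ℝ (y k)) p (Pi.single (ynIdx n) 1) (Pi.single (xnIdx n) 1)
          * pd (ynIdx n) z p := by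
  have hd := SLI.dE3 hU hy hz hE3 k hp (Pi.single (ynIdx n) 1)
  rw [show fderiv ℝ (y k) p (Pi.single (ynIdx n) 1) = pd (ynIdx n) (y k) p from rfl] at hd
  rw [Pi.single_eq_same] at hd
  have s1 := SLI.schwarz hU hz hp (Pi.single (xIdx k) 1) (Pi.single (ynIdx n) 1)
  have s2 := SLI.schwarz hU hz hp (Pi.single (xnIdx n) 1) (Pi.single (ynIdx n) 1)
  rw [SLI.D2_Vt hU hz hp]
  linear_combination hd + s1 - pd (ynIdx n) (y k) p * s2

end SLIAux2
section SLIAux3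
variable {n : ℕ} {U : Set (Fin (n+1) → ℝ)}
  {y : Fin (n-1) → (Fin (n+1) → ℝ) → ℝ} {z : (Fin (n+1) → ℝ) → ℝ}

/-- derivative of `t ↦ (B(γ t), C(γ t))` along an integral curve of `Ṽ_k`. -/
lemma SLI.hasDerivAt_u (hn : 2 ≤ n) (hU : IsOpen U) (hy : ∀ a, ContDiffOn ℝ (⊤:ℕ∞) (y a) U)
    (hz : ContDiffOn ℝ (⊤:ℕ∞) z U) (hE3 : ∀ a, ∀ p ∈ U, E3 y z a p = 0)
    (k : Fin (n-1)) {γ : ℝ → Fin (n+1) → ℝ} {t : ℝ}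
    (hγt : HasDerivAt γ (Vt n y k (γ t)) t) (hp : γ t ∈ U) :
    HasDerivAt (fun s => ((pd (xnIdx n) z (γ s) - γ s (ynIdx n), pd (ynIdx n) z (γ s)) : ℝ × ℝ))
      ( (fderiv ℝ (fderiv ℝ (y k)) (γ t) (Pi.single (xnIdx n) 1) (Pi.single (ynIdx n) 1)
            * (pd (xnIdx n) z (γ t) - γ t (ynIdx n))
          - fderiv ℝ (fderiv ℝ (y k)) (γ t) (Pi.single (xnIdx n) 1) (Pi.single (xnIdx n) 1)
            * pd (ynIdx n) z (γ t),
         fderiv ℝ (fderiv ℝ (y k)) (γ t) (Pi.single (ynIdx n) 1) (Pi.single (ynIdx n) 1)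
            * (pd (xnIdx n) z (γ t) - γ t (ynIdx n))
          - fderiv ℝ (fderiv ℝ (y k)) (γ t) (Pi.single (ynIdx n) 1) (Pi.single (xnIdx n) 1)
            * pd (ynIdx n) z (γ t)) ) t := by
  have hB : HasFDerivAt (fun q => pd (xnIdx n) z q - q (ynIdx n))
      ((ContinuousLinearMap.apply ℝ ℝ (Pi.single (xnIdx n) 1)).comp (fderiv ℝ (fderiv ℝ z) (γ t))
        - ContinuousLinearMap.proj (ynIdx n)) (γ t) :=
    (SLI.hasFDerivAt_pd hU hz hp _).sub (hasFDerivAt_apply (ynIdx n) (γ t))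
  have hC := SLI.hasFDerivAt_pd hU hz hp (ynIdx n)
  have h1 := hB.comp_hasDerivAt t hγt
  have h2 := hC.comp_hasDerivAt t hγt
  have e1 : (((ContinuousLinearMap.apply ℝ ℝ (Pi.single (xnIdx n) 1)).comp
        (fderiv ℝ (fderiv ℝ z) (γ t)) - ContinuousLinearMap.proj (ynIdx n) :
        (Fin (n+1) → ℝ) →L[ℝ] ℝ)) (Vt n y k (γ t))
      = fderiv ℝ (fderiv ℝ (y k)) (γ t) (Pi.single (xnIdx n) 1) (Pi.single (ynIdx n) 1)
            * (pd (xnIdx n) z (γ t) - γ t (ynIdx n))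
        - fderiv ℝ (fderiv ℝ (y k)) (γ t) (Pi.single (xnIdx n) 1) (Pi.single (xnIdx n) 1)
            * pd (ynIdx n) z (γ t) := by
    rw [← SLI.VB hn hU hy hz hE3 k hp]
    simp
  have e2 : (((ContinuousLinearMap.apply ℝ ℝ (Pi.single (ynIdx n) 1)).comp
        (fderiv ℝ (fderiv ℝ z) (γ t)) : (Fin (n+1) → ℝ) →L[ℝ] ℝ)) (Vt n y k (γ t))
      = fderiv ℝ (fderiv ℝ (y k)) (γ t) (Pi.single (ynIdx n) 1) (Pi.single (ynIdx n) 1)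
            * (pd (xnIdx n) z (γ t) - γ t (ynIdx n))
        - fderiv ℝ (fderiv ℝ (y k)) (γ t) (Pi.single (ynIdx n) 1) (Pi.single (xnIdx n) 1)
            * pd (ynIdx n) z (γ t) := by
    rw [← SLI.VC hn hU hy hz hE3 k hp]
    simp
  rw [e1] at h1
  rw [e2] at h2
  exact HasDerivAt.prodMk h1 h2

end SLIAux3
section SLIAux4
variable {n : ℕ} {U : Set (Fin (n+1) → ℝ)}
  {y : Fin (n-1) → (Fin (n+1) → ℝ) → ℝ} {z : (Fin (n+1) → ℝ) → ℝ}

/-- Componentwise derivative of the graph map. -/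
noncomputable def SLI.gphi (n : ℕ) (y : Fin (n - 1) → (Fin (n + 1) → ℝ) → ℝ)
    (z : (Fin (n + 1) → ℝ) → ℝ) (p : Fin (n + 1) → ℝ) :
    Fin (2 * n + 1) → ((Fin (n + 1) → ℝ) →L[ℝ] ℝ) := fun i =>
  if h1 : (i : ℕ) < n then ContinuousLinearMap.proj ⟨(i : ℕ), by omega⟩
  else if h2 : (i : ℕ) < 2 * n - 1 then fderiv ℝ (y ⟨(i : ℕ) - n, by omega⟩) p
  else if h3 : (i : ℕ) = 2 * n - 1 then ContinuousLinearMap.proj (ynIdx n)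
  else fderiv ℝ z p

lemma SLI.hasFDerivAt_graphMap (hU : IsOpen U) (hy : ∀ a, ContDiffOn ℝ (⊤:ℕ∞) (y a) U)
    (hz : ContDiffOn ℝ (⊤:ℕ∞) z U) {p} (hp : p ∈ U) :
    HasFDerivAt (graphMap n y z) (ContinuousLinearMap.pi (SLI.gphi n y z p)) p := by
  apply hasFDerivAt_pi.mpr
  intro i
  by_cases h1 : (i : ℕ) < n
  · simp only [graphMap, SLI.gphi, dif_pos h1]
    exact hasFDerivAt_apply _ p
  · by_cases h2 : (i : ℕ) < 2 * n - 1
    · simp only [graphMap, SLI.gphi, dif_neg h1, dif_pos h2]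
      exact (((hy _).contDiffAt (hU.mem_nhds hp)).differentiableAt (zero_lt_one.trans_le SLI.one_le_top).ne').hasFDerivAt
    · by_cases h3 : (i : ℕ) = 2 * n - 1
      · simp only [graphMap, SLI.gphi, dif_neg h1, dif_neg h2, dif_pos h3]
        exact hasFDerivAt_apply _ p
      · simp only [graphMap, SLI.gphi, dif_neg h1, dif_neg h2, dif_neg h3]
        exact ((hz.contDiffAt (hU.mem_nhds hp)).differentiableAt (zero_lt_one.trans_le SLI.one_le_top).ne').hasFDerivAt

lemma SLI.mu_formula (hn : 2 ≤ n) (hU : IsOpen U) (hy : ∀ a, ContDiffOn ℝ (⊤:ℕ∞) (y a) U)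
    (hz : ContDiffOn ℝ (⊤:ℕ∞) z U) {p} (hp : p ∈ U) (v : Fin (n+1) → ℝ) :
    contactForm n (graphMap n y z p) (fderiv ℝ (graphMap n y z) p v)
      = fderiv ℝ z p v
        - ∑ i : Fin n, graphMap n y z p ⟨n + (i : ℕ), by have := i.isLt; omega⟩
            * v ⟨(i : ℕ), by have := i.isLt; omega⟩ := by
  rw [(SLI.hasFDerivAt_graphMap hU hy hz hp).fderiv]
  simp only [contactForm, ContinuousLinearMap.pi_apply]
  congr 1
  · show SLI.gphi n y z p ⟨2 * n, by omega⟩ v = fderiv ℝ z p v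
    rw [SLI.gphi, dif_neg (by simp <;> omega), dif_neg (by simp <;> omega), dif_neg (by simp <;> omega)]
  · refine Finset.sum_congr rfl fun i _ => ?_
    congr 1
    show SLI.gphi n y z p ⟨(i : ℕ), _⟩ v = _
    rw [SLI.gphi, dif_pos (by simpa using i.isLt)]
    rfl

lemma SLI.mu_single (hn : 2 ≤ n) (hU : IsOpen U) (hy : ∀ a, ContDiffOn ℝ (⊤:ℕ∞) (y a) U)
    (hz : ContDiffOn ℝ (⊤:ℕ∞) z U) {p} (hp : p ∈ U) (j : Fin (n+1)) :
    contactForm n (graphMap n y z p) (fderiv ℝ (graphMap n y z) p (Pi.single j 1))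
      = pd j z p - (if h : (j : ℕ) < n then
          graphMap n y z p ⟨n + (j : ℕ), by omega⟩ else 0) := by
  rw [SLI.mu_formula hn hU hy hz hp]
  congr 1
  by_cases h : (j : ℕ) < n
  · rw [dif_pos h]
    rw [Finset.sum_eq_single (⟨(j : ℕ), h⟩ : Fin n)]
    · have : (⟨(j : ℕ), by omega⟩ : Fin (n+1)) = j := Fin.ext rfl
      rw [this, Pi.single_eq_same, mul_one]
    · intro b _ hb
      rw [Pi.single_eq_of_ne (by
        intro hc
        exact hb (Fin.ext (by simpa [Fin.ext_iff] using hc))), mul_zero]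
    · intro hmem
      exact absurd (Finset.mem_univ _) hmem
  · rw [dif_neg h]
    apply Finset.sum_eq_zero
    intro i _
    rw [Pi.single_eq_of_ne (by
      intro hc
      have := congrArg Fin.val hc
      simp at this
      omega), mul_zero]

lemma SLI.graph_coeff_xn (hn : 2 ≤ n) (p : Fin (n+1) → ℝ) {h} :
    graphMap n y z p ⟨n + (n - 1), h⟩ = p (ynIdx n) := by
  rw [graphMap, dif_neg (by simp <;> omega), dif_neg (by simp <;> omega), dif_pos (by simp <;> omega)]

lemma SLI.graph_coeff_x (hn : 2 ≤ n) (a : Fin (n-1)) (p : Fin (n+1) → ℝ) {h} :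
    graphMap n y z p ⟨n + (a : ℕ), h⟩ = y a p := by
  have ha := a.isLt
  rw [graphMap, dif_neg (by simp <;> omega), dif_pos (by simp <;> omega)]
  congr 1
  exact Fin.ext (by simp)

/-- value of μ_p on the basis vector e_{x_n} is `B p`. -/
lemma SLI.mu_xn (hn : 2 ≤ n) (hU : IsOpen U) (hy : ∀ a, ContDiffOn ℝ (⊤:ℕ∞) (y a) U)
    (hz : ContDiffOn ℝ (⊤:ℕ∞) z U) {p} (hp : p ∈ U) :
    contactForm n (graphMap n y z p) (fderiv ℝ (graphMap n y z) p (Pi.single (xnIdx n) 1))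
      = pd (xnIdx n) z p - p (ynIdx n) := by
  rw [SLI.mu_single hn hU hy hz hp]
  rw [dif_pos (by simp [xnIdx]; omega)]
  congr 1
  have : ((xnIdx n : Fin (n+1)) : ℕ) = n - 1 := rfl
  rw [show (⟨n + ((xnIdx n : Fin (n+1)) : ℕ), by omega⟩ : Fin (2*n+1))
      = ⟨n + (n-1), by omega⟩ from Fin.ext (by simp [this])]
  exact SLI.graph_coeff_xn hn p

/-- value of μ_p on the basis vector e_{y_n} is `C p`. -/
lemma SLI.mu_yn (hn : 2 ≤ n) (hU : IsOpen U) (hy : ∀ a, ContDiffOn ℝ (⊤:ℕ∞) (y a) U)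
    (hz : ContDiffOn ℝ (⊤:ℕ∞) z U) {p} (hp : p ∈ U) :
    contactForm n (graphMap n y z p) (fderiv ℝ (graphMap n y z) p (Pi.single (ynIdx n) 1))
      = pd (ynIdx n) z p := by
  rw [SLI.mu_single hn hU hy hz hp]
  rw [dif_neg (by simp [ynIdx])]
  ring

/-- value of μ_p on the basis vector e_{x_a} is `A_a p`. -/
lemma SLI.mu_x (hn : 2 ≤ n) (hU : IsOpen U) (hy : ∀ a, ContDiffOn ℝ (⊤:ℕ∞) (y a) U)
    (hz : ContDiffOn ℝ (⊤:ℕ∞) z U) {p} (hp : p ∈ U) (a : Fin (n-1)) :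
    contactForm n (graphMap n y z p) (fderiv ℝ (graphMap n y z) p (Pi.single (xIdx a) 1))
      = pd (xIdx a) z p - y a p := by
  have ha := a.isLt
  rw [SLI.mu_single hn hU hy hz hp]
  rw [dif_pos (by simp [xIdx]; omega)]
  congr 1
  rw [show (⟨n + ((xIdx a : Fin (n+1)) : ℕ), by omega⟩ : Fin (2*n+1))
      = ⟨n + (a : ℕ), by omega⟩ from Fin.ext (by simp [xIdx])]
  exact SLI.graph_coeff_x hn a p

end SLIAux4
section SLIAux5
variable {n : ℕ} {U : Set (Fin (n+1) → ℝ)}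
  {y : Fin (n-1) → (Fin (n+1) → ℝ) → ℝ} {z : (Fin (n+1) → ℝ) → ℝ}

lemma SLI.clm_expand {m : ℕ} (L : (Fin m → ℝ) →L[ℝ] ℝ) (v : Fin m → ℝ) :
    L v = ∑ j, v j * L (Pi.single j 1) := by
  have hv : v = ∑ j, v j • (Pi.single j 1 : Fin m → ℝ) := by
    refine (Finset.univ_sum_single v).symm.trans (Finset.sum_congr rfl fun j _ => ?_)
    rw [← Pi.single_smul, smul_eq_mul, mul_one]
  conv_lhs => rw [hv]
  rw [map_sum]
  refine Finset.sum_congr rfl fun j _ => ?_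
  rw [map_smul, smul_eq_mul]

/-- The contact form at `q` as a continuous linear map. -/
noncomputable def SLI.cfCLM (n : ℕ) (q : Fin (2*n+1) → ℝ) : (Fin (2*n+1) → ℝ) →L[ℝ] ℝ :=
  ContinuousLinearMap.proj ⟨2*n, by omega⟩
    - ∑ i : Fin n, q ⟨n + (i:ℕ), by have := i.isLt; omega⟩
        • ContinuousLinearMap.proj ⟨(i:ℕ), by have := i.isLt; omega⟩

lemma SLI.cfCLM_apply (q u : Fin (2*n+1) → ℝ) : SLI.cfCLM n q u = contactForm n q u := by
  simp [SLI.cfCLM, contactForm, ContinuousLinearMap.sum_apply]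

lemma SLI.mu_linear (hU : IsOpen U) (hy : ∀ a, ContDiffOn ℝ (⊤:ℕ∞) (y a) U)
    (hz : ContDiffOn ℝ (⊤:ℕ∞) z U) {p} (hp : p ∈ U) (v : Fin (n+1) → ℝ) :
    contactForm n (graphMap n y z p) (fderiv ℝ (graphMap n y z) p v)
      = ∑ j : Fin (n+1), v j *
          contactForm n (graphMap n y z p) (fderiv ℝ (graphMap n y z) p (Pi.single j 1)) := by
  rw [(SLI.hasFDerivAt_graphMap hU hy hz hp).fderiv]
  rw [← SLI.cfCLM_apply]
  have : (SLI.cfCLM n (graphMap n y z p)) ((ContinuousLinearMap.pi (SLI.gphi n y z p)) v)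
      = ((SLI.cfCLM n (graphMap n y z p)).comp (ContinuousLinearMap.pi (SLI.gphi n y z p))) v :=
    rfl
  rw [this, SLI.clm_expand]
  refine Finset.sum_congr rfl fun j _ => ?_
  rw [ContinuousLinearMap.comp_apply, SLI.cfCLM_apply]

end SLIAux5

/-- The singular locus `S = {p ∈ U : μ_p = 0}` of the pulled-back
contact form `μ = F*α` is invariant under the flow of `Ṽ_k`. -/
theorem singular_locus_invariant (n : ℕ) (hn : 2 ≤ n) (U : Set (Fin (n + 1) → ℝ)) (hU : IsOpen U)
    (y : Fin (n - 1) → (Fin (n + 1) → ℝ) → ℝ) (z : (Fin (n + 1) → ℝ) → ℝ)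
    (hy : ∀ a, ContDiffOn ℝ (⊤ : ℕ∞) (y a) U) (hz : ContDiffOn ℝ (⊤ : ℕ∞) z U)
    (hE1 : ∀ a b, ∀ p ∈ U, E1 y z a b p = 0)
    (hE2 : ∀ a b, ∀ p ∈ U, E2 y z a b p = 0)
    (hE3 : ∀ a, ∀ p ∈ U, E3 y z a p = 0)
    (k : Fin (n - 1)) (I : Set ℝ) (hI : I.OrdConnected)
    (γ : ℝ → Fin (n + 1) → ℝ)
    (hγU : ∀ t ∈ I, γ t ∈ U)
    (hγ : ∀ t ∈ I, HasDerivAt γ (Vt n y k (γ t)) t)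
    (t₀ : ℝ) (ht₀ : t₀ ∈ I)
    (hvanish : ∀ v : Fin (n + 1) → ℝ,
      contactForm n (graphMap n y z (γ t₀)) (fderiv ℝ (graphMap n y z) (γ t₀) v) = 0) :
    ∀ t ∈ I, ∀ v : Fin (n + 1) → ℝ,
      contactForm n (graphMap n y z (γ t)) (fderiv ℝ (graphMap n y z) (γ t) v) = 0 := by
  intro t1 ht1
  have hp1 : γ t1 ∈ U := hγU t1 ht1
  have hB0 : pd (xnIdx n) z (γ t₀) - γ t₀ (ynIdx n) = 0 := by
    rw [← SLI.mu_xn hn hU hy hz (hγU t₀ ht₀)]; exact hvanish _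
  have hC0 : pd (ynIdx n) z (γ t₀) = 0 := by
    rw [← SLI.mu_yn hn hU hy hz (hγU t₀ ht₀)]; exact hvanish _
  set a : ℝ := min t₀ t1 with ha
  set b : ℝ := max t₀ t1 with hb
  have hIcc : Icc a b ⊆ I := by
    rcases le_total t₀ t1 with h | h
    · rw [ha, hb, min_eq_left h, max_eq_right h]; exact hI.out ht₀ ht1
    · rw [ha, hb, min_eq_right h, max_eq_left h]; exact hI.out ht1 ht₀
  set c11 : ℝ → ℝ := fun s =>
    fderiv ℝ (fderiv ℝ (y k)) (γ s) (Pi.single (xnIdx n) 1) (Pi.single (ynIdx n) 1) with hc11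
  set c12 : ℝ → ℝ := fun s =>
    fderiv ℝ (fderiv ℝ (y k)) (γ s) (Pi.single (xnIdx n) 1) (Pi.single (xnIdx n) 1) with hc12
  set c21 : ℝ → ℝ := fun s =>
    fderiv ℝ (fderiv ℝ (y k)) (γ s) (Pi.single (ynIdx n) 1) (Pi.single (ynIdx n) 1) with hc21
  set c22 : ℝ → ℝ := fun s =>
    fderiv ℝ (fderiv ℝ (y k)) (γ s) (Pi.single (ynIdx n) 1) (Pi.single (xnIdx n) 1) with hc22
  have hccont : ContinuousOn (fun s => |c11 s| + |c12 s| + |c21 s| + |c22 s|) (Icc a b) := by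
    have hco : ∀ (v w : Fin (n+1) → ℝ), ContinuousOn
        (fun s => fderiv ℝ (fderiv ℝ (y k)) (γ s) v w) (Icc a b) := by
      intro v w s hs
      exact ((SLI.contAt_D2 hU (hy k) (hγU s (hIcc hs)) v w).comp
        (hγ s (hIcc hs)).continuousAt).continuousWithinAt
    exact (((hco _ _).abs.add (hco _ _).abs).add (hco _ _).abs).add (hco _ _).abs
  obtain ⟨R, hR⟩ := isCompact_Icc.exists_bound_of_continuousOn hccont
  set K : NNReal := ⟨max R 0, le_max_right _ _⟩ with hK
  have hKcoe : (K : ℝ) = max R 0 := rfl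
  set vf : ℝ → ℝ × ℝ → ℝ × ℝ := fun s x =>
    if s ∈ Icc a b then (c11 s * x.1 - c12 s * x.2, c21 s * x.1 - c22 s * x.2) else 0 with hvf
  have hrow : ∀ (a' b' u v' : ℝ), |a' * u - b' * v'| ≤ (|a'| + |b'|) * max |u| |v'| := by
    intro a' b' u v'
    calc |a' * u - b' * v'| ≤ |a' * u| + |b' * v'| := by
          rw [sub_eq_add_neg]
          exact (abs_add_le _ _).trans_eq (by rw [abs_neg])
      _ = |a'| * |u| + |b'| * |v'| := by rw [abs_mul, abs_mul]
      _ ≤ |a'| * max |u| |v'| + |b'| * max |u| |v'| := by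
          gcongr
          exacts [le_max_left _ _, le_max_right _ _]
      _ = (|a'| + |b'|) * max |u| |v'| := by ring
  have hlip : ∀ s, LipschitzWith K (vf s) := by
    intro s
    rw [lipschitzWith_iff_dist_le_mul]
    intro x x'
    by_cases hs : s ∈ Icc a b
    · simp only [hvf, if_pos hs]
      rw [Prod.dist_eq, Prod.dist_eq]
      simp only [Real.dist_eq]
      have hRs := hR s hs
      rw [Real.norm_eq_abs] at hRs
      have hsum : |c11 s| + |c12 s| + |c21 s| + |c22 s| ≤ max R 0 :=
        (le_abs_self _).trans (hRs.trans (le_max_left _ _))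
      have hmax0 : (0:ℝ) ≤ max |x.1 - x'.1| |x.2 - x'.2| :=
        le_trans (abs_nonneg _) (le_max_left _ _)
      have hb1 : |c11 s * x.1 - c12 s * x.2 - (c11 s * x'.1 - c12 s * x'.2)|
          ≤ (|c11 s| + |c12 s|) * max |x.1 - x'.1| |x.2 - x'.2| := by
        have h' := hrow (c11 s) (c12 s) (x.1 - x'.1) (x.2 - x'.2)
        calc |c11 s * x.1 - c12 s * x.2 - (c11 s * x'.1 - c12 s * x'.2)|
            = |c11 s * (x.1 - x'.1) - c12 s * (x.2 - x'.2)| := by ring_nf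
          _ ≤ _ := h'
      have hb2 : |c21 s * x.1 - c22 s * x.2 - (c21 s * x'.1 - c22 s * x'.2)|
          ≤ (|c21 s| + |c22 s|) * max |x.1 - x'.1| |x.2 - x'.2| := by
        have h' := hrow (c21 s) (c22 s) (x.1 - x'.1) (x.2 - x'.2)
        calc |c21 s * x.1 - c22 s * x.2 - (c21 s * x'.1 - c22 s * x'.2)|
            = |c21 s * (x.1 - x'.1) - c22 s * (x.2 - x'.2)| := by ring_nf
          _ ≤ _ := h'
      rw [hKcoe]
      apply max_le
      · refine hb1.trans (mul_le_mul_of_nonneg_right ?_ hmax0)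
        have h1 := abs_nonneg (c21 s); have h2 := abs_nonneg (c22 s); linarith
      · refine hb2.trans (mul_le_mul_of_nonneg_right ?_ hmax0)
        have h1 := abs_nonneg (c11 s); have h2 := abs_nonneg (c12 s); linarith
    · simp only [hvf, if_neg hs]
      simp
      positivity
  have hzerovf : ∀ s, vf s ((0:ℝ), (0:ℝ)) = 0 := by
    intro s; rw [hvf]; by_cases hs : s ∈ Icc a b <;> simp [hs]
  have hBt' : ∀ s ∈ Icc a b, HasDerivAt
      (fun r => ((pd (xnIdx n) z (γ r) - γ r (ynIdx n), pd (ynIdx n) z (γ r)) : ℝ × ℝ))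
      (vf s ((pd (xnIdx n) z (γ s) - γ s (ynIdx n), pd (ynIdx n) z (γ s)))) s := by
    intro s hs
    have h := SLI.hasDerivAt_u hn hU hy hz hE3 k (hγ s (hIcc hs)) (hγU s (hIcc hs))
    have hv : vf s ((pd (xnIdx n) z (γ s) - γ s (ynIdx n), pd (ynIdx n) z (γ s)))
        = (c11 s * (pd (xnIdx n) z (γ s) - γ s (ynIdx n)) - c12 s * pd (ynIdx n) z (γ s),
           c21 s * (pd (xnIdx n) z (γ s) - γ s (ynIdx n)) - c22 s * pd (ynIdx n) z (γ s)) := by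
      rw [hvf]; simp only [if_pos hs]
    rw [hv]
    exact h
  have hBtcont : ContinuousOn
      (fun r => ((pd (xnIdx n) z (γ r) - γ r (ynIdx n), pd (ynIdx n) z (γ r)) : ℝ × ℝ))
      (Icc a b) := fun s hs => (hBt' s hs).continuousAt.continuousWithinAt
  have hBt0 : ((pd (xnIdx n) z (γ t₀) - γ t₀ (ynIdx n), pd (ynIdx n) z (γ t₀)) : ℝ × ℝ)
      = ((0:ℝ), (0:ℝ)) := by
    rw [hB0, hC0]
  have hgside : ∀ s, HasDerivWithinAt (fun _ : ℝ => ((0:ℝ), (0:ℝ)))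
      (vf s ((0:ℝ), (0:ℝ))) (Ici s) s := by
    intro s
    rw [hzerovf s]
    exact (hasDerivAt_const _ _).hasDerivWithinAt
  have hgside' : ∀ s, HasDerivWithinAt (fun _ : ℝ => ((0:ℝ), (0:ℝ)))
      (vf s ((0:ℝ), (0:ℝ))) (Iic s) s := by
    intro s
    rw [hzerovf s]
    exact (hasDerivAt_const _ _).hasDerivWithinAt
  have hfinal : ((pd (xnIdx n) z (γ t1) - γ t1 (ynIdx n), pd (ynIdx n) z (γ t1)) : ℝ × ℝ)
      = ((0:ℝ), (0:ℝ)) := by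
    rcases le_total t₀ t1 with h | h
    · have ha' : a = t₀ := min_eq_left h
      have hb' : b = t1 := max_eq_right h
      have heq := ODE_solution_unique_of_mem_Icc_right
        (v := vf) (s := fun _ => (univ : Set (ℝ × ℝ))) (K := K)
        (fun t _ => (hlip t).lipschitzOnWith)
        hBtcont
        (fun s hs => (hBt' s (Ico_subset_Icc_self hs)).hasDerivWithinAt)
        (fun s _ => mem_univ _)
        continuousOn_const
        (fun s _ => hgside s)
        (fun s _ => mem_univ _)
        (by rw [ha']; exact hBt0)
      have hmem : b ∈ Icc a b := right_mem_Icc.mpr min_le_max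
      have := heq hmem
      rw [hb'] at this
      exact this
    · have ha' : a = t1 := min_eq_right h
      have hb' : b = t₀ := max_eq_left h
      have heq := ODE_solution_unique_of_mem_Icc_left
        (v := vf) (s := fun _ => (univ : Set (ℝ × ℝ))) (K := K)
        (fun t _ => (hlip t).lipschitzOnWith)
        hBtcont
        (fun s hs => (hBt' s (Ioc_subset_Icc_self hs)).hasDerivWithinAt)
        (fun s _ => mem_univ _)
        continuousOn_const
        (fun s _ => hgside' s)
        (fun s _ => mem_univ _)
        (by rw [hb']; exact hBt0)
      have hmem : a ∈ Icc a b := left_mem_Icc.mpr min_le_max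
      have := heq hmem
      rw [ha'] at this
      exact this
  have hB1 : pd (xnIdx n) z (γ t1) - γ t1 (ynIdx n) = 0 := congrArg Prod.fst hfinal
  have hC1 : pd (ynIdx n) z (γ t1) = 0 := congrArg Prod.snd hfinal
  intro v
  rw [SLI.mu_linear hU hy hz hp1 v]
  apply Finset.sum_eq_zero
  intro j _
  have hjlt := j.isLt
  by_cases hj1 : (j : ℕ) < n - 1
  · have hxj : j = xIdx ⟨(j : ℕ), hj1⟩ := Fin.ext rfl
    rw [hxj, SLI.mu_x hn hU hy hz hp1]
    have hE := hE3 ⟨(j : ℕ), hj1⟩ (γ t1) hp1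
    simp only [E3] at hE
    have hz0 : pd (xIdx ⟨(j : ℕ), hj1⟩) z (γ t1) - y ⟨(j : ℕ), hj1⟩ (γ t1) = 0 := by
      linear_combination hE + pd (ynIdx n) (y ⟨(j : ℕ), hj1⟩) (γ t1) * hB1
        - pd (xnIdx n) (y ⟨(j : ℕ), hj1⟩) (γ t1) * hC1
    rw [hz0, mul_zero]
  · by_cases hj2 : (j : ℕ) = n - 1
    · have hxj : j = xnIdx n := Fin.ext hj2
      rw [hxj, SLI.mu_xn hn hU hy hz hp1, hB1, mul_zero]
    · have hxj : j = ynIdx n := Fin.ext (show (j : ℕ) = n by omega)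
      rw [hxj, SLI.mu_yn hn hU hy hz hp1, hC1, mul_zero]
end
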